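/- arXiv:1206.2536 — 6 statements merged into one kernel-verified Lean document; each statement's English description precedes it below -/
import Mathlib

section
/- For any nonzero matrix X with singular values x_1 ≥ x_2 ≥ ... and trace norm Λ_x = Σ_i x_i, and any q with 1 < q < ∞, the Rényi entropy of the normalized singular values satisfies ln(Λ_x / x_1) ≤ S_q(X) ≤ (q/(q-1)) ln(Λ_x / x_1), where S_q(X) = (1/(1-q)) ln Σ_i (x_i/Λ_x)^q. -/
open Matrix
open scoped BigOperators Kronecker ComplexOrder

noncomputable section

/-- Singular values of a square complex matrix: square roots of eigenvalues of `X * Xᴴ`. -/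
def singularValues {n : Type*} [Fintype n] [DecidableEq n] (X : Matrix n n ℂ) : n → ℝ :=
  fun i => Real.sqrt ((Matrix.posSemidef_self_mul_conjTranspose X).1.eigenvalues i)

/-- Shannon entropy of the normalization of a nonnegative vector. -/
def shannonH {ι : Type*} [Fintype ι] (v : ι → ℝ) : ℝ :=
  -∑ i, (v i / ∑ j, v j) * Real.log (v i / ∑ j, v j)

/-- Rényi entropy of order `q` of the normalization of a nonnegative vector. -/
def renyiH {ι : Type*} [Fintype ι] (q : ℝ) (v : ι → ℝ) : ℝ :=
  (1 / (1 - q)) * Real.log (∑ i, (v i / ∑ j, v j) ^ q)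

/-- Unnormalized (von Neumann–type) entropy of the singular value vector. -/
def vnEntropy {n : Type*} [Fintype n] [DecidableEq n] (M : Matrix n n ℂ) : ℝ :=
  -∑ i, singularValues M i * Real.log (singularValues M i)

/-- A quantum channel: completely positive (Kraus form) and trace preserving. -/
def IsCPTP {N : ℕ} (Φ : Matrix (Fin N) (Fin N) ℂ →ₗ[ℂ] Matrix (Fin N) (Fin N) ℂ) : Prop :=
  ∃ (k : ℕ) (A : Fin k → Matrix (Fin N) (Fin N) ℂ),
    (∀ ρ, Φ ρ = ∑ i, A i * ρ * (A i)ᴴ) ∧ (∑ i, (A i)ᴴ * A i = 1)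

/-- Density matrix predicate. -/
def IsDensityMatrix {n : Type*} [Fintype n] [DecidableEq n] (ρ : Matrix n n ℂ) : Prop :=
  ρ.PosSemidef ∧ ρ.trace = 1

/-- The Choi (dynamical) matrix of a linear map on matrices. -/
def choiMatrix {N : ℕ} (Φ : Matrix (Fin N) (Fin N) ℂ →ₗ[ℂ] Matrix (Fin N) (Fin N) ℂ) :
    Matrix (Fin N × Fin N) (Fin N × Fin N) ℂ :=
  fun p q => Φ (Matrix.single p.2 q.2 1) p.1 q.1

/-- The superoperator matrix of a linear map on matrices. -/
def superMatrix {N : ℕ} (Φ : Matrix (Fin N) (Fin N) ℂ →ₗ[ℂ] Matrix (Fin N) (Fin N) ℂ) :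
    Matrix (Fin N × Fin N) (Fin N × Fin N) ℂ :=
  fun p q => Φ (Matrix.single q.1 q.2 1) p.1 p.2

/-- Hilbert–Schmidt norm of a matrix. -/
def hsNorm {n : Type*} [Fintype n] [DecidableEq n] (M : Matrix n n ℂ) : ℝ :=
  Real.sqrt ((M * Mᴴ).trace.re)

/-- Largest singular value of the superoperator of `Φ`, as the operator norm w.r.t. HS norm. -/
def sigma1 {N : ℕ} (Φ : Matrix (Fin N) (Fin N) ℂ →ₗ[ℂ] Matrix (Fin N) (Fin N) ℂ) : ℝ :=
  sSup {r : ℝ | ∃ M : Matrix (Fin N) (Fin N) ℂ, hsNorm M = 1 ∧ r = hsNorm (Φ M)}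

/-- Sum of the (at most) `m` largest entries of a nonnegative vector. -/
def partialMax {ι : Type*} [Fintype ι] (v : ι → ℝ) (m : ℕ) : ℝ :=
  sSup {t : ℝ | ∃ s : Finset ι, s.card ≤ m ∧ t = ∑ i ∈ s, v i}

/-- `Majorizes w v` means `v ≺ w` (for nonnegative vectors, possibly of different lengths). -/
def Majorizes {ι κ : Type*} [Fintype ι] [Fintype κ] (w : ι → ℝ) (v : κ → ℝ) : Prop :=
  (∑ i, v i = ∑ i, w i) ∧ ∀ m : ℕ, partialMax v m ≤ partialMax w m



theorem renyi_entropy_singular_bounds {n : Type*} [Fintype n] [DecidableEq n] [Nonempty n]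
    (X : Matrix n n ℂ) (hX : X ≠ 0) (q : ℝ) (hq : 1 < q) :
    Real.log ((∑ i, singularValues X i) / (⨆ i, singularValues X i))
        ≤ renyiH q (singularValues X) ∧
    renyiH q (singularValues X)
        ≤ (q / (q - 1)) *
          Real.log ((∑ i, singularValues X i) / (⨆ i, singularValues X i)) := by
  classical
  set x := singularValues X with hxdef
  have hxnn : ∀ i, 0 ≤ x i := fun i => Real.sqrt_nonneg _
  -- some singular value is positive
  have hne : ∃ i, 0 < x i := by
    by_contra h
    push_neg at h
    have hall : ∀ i, x i = 0 := fun i => le_antisymm (h i) (hxnn i)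
    have hev : ∀ i, (Matrix.posSemidef_self_mul_conjTranspose X).1.eigenvalues i = 0 := by
      intro i
      have h0 := hall i
      rw [hxdef] at h0
      have hnn := (Matrix.posSemidef_self_mul_conjTranspose X).eigenvalues_nonneg i
      have := Real.sqrt_eq_zero hnn |>.mp h0
      exact this
    have : X * Xᴴ = 0 := by
      have hspec := (Matrix.posSemidef_self_mul_conjTranspose X).1.spectral_theorem
      rw [hspec]
      have : Matrix.diagonal (RCLike.ofReal ∘ (Matrix.posSemidef_self_mul_conjTranspose X).1.eigenvalues) = (0 : Matrix n n ℂ) := by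
        ext i j
        by_cases hij : i = j <;> simp [Matrix.diagonal, hij, hev]
      rw [this, map_zero]
    exact hX (Matrix.self_mul_conjTranspose_eq_zero.mp this)
  obtain ⟨i1, hi1⟩ := hne
  set Λ := ∑ i, x i with hΛdef
  have hΛpos : 0 < Λ := by
    refine Finset.sum_pos' (fun i _ => hxnn i) ⟨i1, Finset.mem_univ _, hi1⟩
  -- the sup is attained
  obtain ⟨i0, hi0⟩ := Finite.exists_max x
  have hsup : (⨆ i, x i) = x i0 :=
    le_antisymm (ciSup_le hi0) (le_ciSup (Set.Finite.bddAbove (Set.finite_range x)) i0)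
  have hx0pos : 0 < x i0 := lt_of_lt_of_le hi1 (hi0 i1)
  have hx0leΛ : x i0 ≤ Λ :=
    Finset.single_le_sum (fun i _ => hxnn i) (Finset.mem_univ i0)
  set p : n → ℝ := fun i => x i / Λ with hpdef
  have hpnn : ∀ i, 0 ≤ p i := fun i => div_nonneg (hxnn i) hΛpos.le
  have hpsum : ∑ i, p i = 1 := by
    rw [hpdef]
    simp only
    rw [← Finset.sum_div, div_self hΛpos.ne']
  have hpmaxpos : 0 < p i0 := div_pos hx0pos hΛpos
  have hple : ∀ i, p i ≤ p i0 := fun i => div_le_div_of_nonneg_right (hi0 i) hΛpos.le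
  set S := ∑ i, p i ^ q with hSdef
  have hSlb : p i0 ^ q ≤ S :=
    Finset.single_le_sum (fun i _ => Real.rpow_nonneg (hpnn i) q) (Finset.mem_univ i0)
  have hSub : S ≤ p i0 ^ (q - 1) := by
    calc S ≤ ∑ i, p i0 ^ (q - 1) * p i := by
          refine Finset.sum_le_sum fun i _ => ?_
          rcases eq_or_lt_of_le (hpnn i) with h0 | hpos
          · rw [← h0, Real.zero_rpow (by positivity)]
            positivity
          · have : p i ^ q = p i ^ (q - 1) * p i := by
              rw [← Real.rpow_add_one hpos.ne' (q - 1), sub_add_cancel]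
            rw [this]
            exact mul_le_mul_of_nonneg_right
              (Real.rpow_le_rpow (hpnn i) (hple i) (by linarith)) (hpnn i)
      _ = p i0 ^ (q - 1) := by rw [← Finset.mul_sum, hpsum, mul_one]
  have hSpos : 0 < S := lt_of_lt_of_le (Real.rpow_pos_of_pos hpmaxpos q) hSlb
  have hlogS_ub : Real.log S ≤ (q - 1) * Real.log (p i0) := by
    calc Real.log S ≤ Real.log (p i0 ^ (q - 1)) := Real.log_le_log hSpos hSub
      _ = (q - 1) * Real.log (p i0) := Real.log_rpow hpmaxpos _
  have hlogS_lb : q * Real.log (p i0) ≤ Real.log S := by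
    calc q * Real.log (p i0) = Real.log (p i0 ^ q) := (Real.log_rpow hpmaxpos _).symm
      _ ≤ Real.log S := Real.log_le_log (Real.rpow_pos_of_pos hpmaxpos q) hSlb
  have hlogdiv : Real.log (Λ / x i0) = -Real.log (p i0) := by
    rw [hpdef]
    simp only
    rw [Real.log_div hΛpos.ne' hx0pos.ne', Real.log_div hx0pos.ne' hΛpos.ne']
    ring
  have hrenyi : renyiH q x = (1 / (1 - q)) * Real.log S := by
    rw [renyiH, hSdef, hpdef]
  have hqneg : 1 / (1 - q) < 0 := by
    apply div_neg_of_pos_of_neg one_pos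
    linarith
  have h1q : (1 : ℝ) - q ≠ 0 := by linarith
  have hq1 : q - 1 ≠ 0 := by linarith
  rw [hsup, hrenyi]
  constructor
  · rw [hlogdiv]
    have := mul_le_mul_of_nonpos_left hlogS_ub hqneg.le
    calc -Real.log (p i0) = (1 / (1 - q)) * ((q - 1) * Real.log (p i0)) := by
          field_simp [h1q]
          ring
      _ ≤ (1 / (1 - q)) * Real.log S := this
  · rw [hlogdiv]
    have := mul_le_mul_of_nonpos_left hlogS_lb hqneg.le
    calc (1 / (1 - q)) * Real.log S ≤ (1 / (1 - q)) * (q * Real.log (p i0)) := this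
      _ = q / (q - 1) * -Real.log (p i0) := by
          field_simp [h1q, hq1]
          ring

end
end

section
/- For any CPTP map Φ acting on N×N density matrices, the largest singular value of its superoperator matrix satisfies σ_1(Φ) = max over density matrices ρ of √(Tr Φ(ρ)² / Tr ρ²). -/
open Matrix
open scoped BigOperators Kronecker ComplexOrder

noncomputable section

set_option linter.unusedSectionVars false
set_option maxHeartbeats 1000000
attribute [local instance] Matrix.frobeniusNormedAddCommGroup Matrix.frobeniusNormedRing
  Matrix.frobeniusNormedSpace

section AuxLemmas
variable {n : Type*} [Fintype n] [DecidableEq n]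


lemma trace_mul_ct_re (M : Matrix n n ℂ) : ((M * Mᴴ).trace).re = ‖M‖ ^ 2 := by
  have h2 : ((M * Mᴴ).trace).re = ∑ i, ∑ j, ‖M i j‖ ^ 2 := by
    have h1 : (M * Mᴴ).trace = ∑ i, ∑ j, M i j * (starRingEnd ℂ) (M i j) := by
      simp [Matrix.trace, Matrix.mul_apply, Matrix.diag, Matrix.conjTranspose_apply]
    rw [h1, Complex.re_sum]
    refine Finset.sum_congr rfl fun i _ => ?_
    rw [Complex.re_sum]
    refine Finset.sum_congr rfl fun j _ => ?_
    rw [Complex.mul_conj]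
    norm_cast
    simp [Complex.normSq_eq_norm_sq]
  rw [h2, Matrix.frobenius_norm_def, ← Real.rpow_natCast _ 2, ← Real.rpow_mul (by positivity)]
  norm_num

lemma psd_diag_nonneg {P : Matrix n n ℂ} (hP : P.PosSemidef) (i : n) : 0 ≤ P i i := by
  exact hP.diag_nonneg

lemma re_trace_nonneg_of_psd {P : Matrix n n ℂ} (hP : P.PosSemidef) : 0 ≤ (P.trace).re := by
  rw [Matrix.trace, Complex.re_sum]
  exact Finset.sum_nonneg fun i _ => (Complex.le_def.mp (psd_diag_nonneg hP i)).1

lemma re_trace_mul_nonneg {P Q : Matrix n n ℂ} (hP : P.PosSemidef) (hQ : Q.PosSemidef) :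
    0 ≤ ((P * Q).trace).re := by
  open scoped MatrixOrder in
  set s := CFC.sqrt Q with hs
  open scoped MatrixOrder in
  have hss : s * s = Q := CFC.sqrt_mul_sqrt_self Q hQ.nonneg
  open scoped MatrixOrder in
  have hsherm : sᴴ = s := (CFC.sqrt_nonneg Q).posSemidef.1
  have h1 : (P * Q).trace = (s * P * sᴴ).trace := by
    rw [hsherm, ← hss, ← Matrix.mul_assoc, Matrix.trace_mul_cycle]
  rw [h1]
  exact re_trace_nonneg_of_psd (hP.mul_mul_conjTranspose_same s)

lemma psd_sum {k : ℕ} (f : Fin k → Matrix n n ℂ) (h : ∀ i, (f i).PosSemidef) :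
    (∑ i, f i).PosSemidef := by
  classical
  exact Finset.sum_induction f _ (fun a b ha hb => ha.add hb) Matrix.PosSemidef.zero
    (fun i _ => h i)

lemma psd_smul {c : ℝ} (hc : 0 ≤ c) {X : Matrix n n ℂ} (hX : X.PosSemidef) :
    ((c : ℂ) • X).PosSemidef := by
  refine ⟨?_, fun x => ?_⟩
  · show ((c : ℂ) • X)ᴴ = (c : ℂ) • X
    rw [Matrix.conjTranspose_smul, hX.1, Complex.star_def, Complex.conj_ofReal]
  · have h0 : (0 : ℂ) ≤ (c : ℂ) := by exact_mod_cast Complex.zero_le_real.mpr hc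
    exact (hX.smul h0).2 x

lemma re_trace_symm (X Y : Matrix n n ℂ) : ((Y * Xᴴ).trace).re = ((X * Yᴴ).trace).re := by
  have h : (Y * Xᴴ) = (X * Yᴴ)ᴴ := by simp
  rw [h, Matrix.trace_conjTranspose]
  exact Complex.conj_re _

lemma norm_sq_add' (X Y : Matrix n n ℂ) :
    ‖X + Y‖ ^ 2 = ‖X‖ ^ 2 + ‖Y‖ ^ 2 + 2 * ((X * Yᴴ).trace).re := by
  rw [← trace_mul_ct_re, ← trace_mul_ct_re, ← trace_mul_ct_re]
  have h : (X + Y) * (X + Y)ᴴ = X * Xᴴ + (X * Yᴴ + (Y * Xᴴ + Y * Yᴴ)) := by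
    rw [Matrix.conjTranspose_add, add_mul, mul_add, mul_add]; abel
  rw [h]
  simp only [Matrix.trace_add, Complex.add_re]
  rw [re_trace_symm X Y]
  ring

lemma norm_sq_sub' (X Y : Matrix n n ℂ) :
    ‖X - Y‖ ^ 2 = ‖X‖ ^ 2 + ‖Y‖ ^ 2 - 2 * ((X * Yᴴ).trace).re := by
  have h := norm_sq_add' X (-Y)
  simp only [Matrix.conjTranspose_neg, Matrix.mul_neg, Matrix.trace_neg, Complex.neg_re,
    norm_neg] at h
  rw [sub_eq_add_neg X Y] at *
  rw [h]; ring

lemma tr_sandwich (U : Matrix.unitaryGroup n ℂ) (a : n → ℝ) :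
    ((U : Matrix n n ℂ) * Matrix.diagonal (fun i => (a i : ℂ)) * star (U : Matrix n n ℂ)).trace
      = (∑ i, a i : ℝ) := by
  rw [Matrix.trace_mul_cycle, Matrix.mem_unitaryGroup_iff'.mp U.2, one_mul,
    Matrix.trace_diagonal]
  push_cast; ring

lemma sandwich_mul (U : Matrix.unitaryGroup n ℂ) (a b : n → ℝ) :
    ((U : Matrix n n ℂ) * Matrix.diagonal (fun i => (a i : ℂ)) * star (U : Matrix n n ℂ)) *
    ((U : Matrix n n ℂ) * Matrix.diagonal (fun i => (b i : ℂ)) * star (U : Matrix n n ℂ))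
    = (U : Matrix n n ℂ) * Matrix.diagonal (fun i => ((a i * b i : ℝ) : ℂ)) *
        star (U : Matrix n n ℂ) := by
  have h : star (U : Matrix n n ℂ) * (U : Matrix n n ℂ) = 1 := Matrix.mem_unitaryGroup_iff'.mp U.2
  calc ((U : Matrix n n ℂ) * Matrix.diagonal (fun i => (a i : ℂ)) * star (U : Matrix n n ℂ)) *
      ((U : Matrix n n ℂ) * Matrix.diagonal (fun i => (b i : ℂ)) * star (U : Matrix n n ℂ))
      = (U : Matrix n n ℂ) * (Matrix.diagonal (fun i => (a i : ℂ)) *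
        (star (U : Matrix n n ℂ) * (U : Matrix n n ℂ)) * Matrix.diagonal (fun i => (b i : ℂ))) *
        star (U : Matrix n n ℂ) := by
        simp only [Matrix.mul_assoc]
    _ = _ := by
        rw [h, Matrix.mul_one, Matrix.diagonal_mul_diagonal]
        norm_num

lemma sandwich_psd (U : Matrix.unitaryGroup n ℂ) {a : n → ℝ} (ha : ∀ i, 0 ≤ a i) :
    ((U : Matrix n n ℂ) * Matrix.diagonal (fun i => (a i : ℂ)) *
      star (U : Matrix n n ℂ)).PosSemidef := by
  rw [Matrix.star_eq_conjTranspose]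
  exact (Matrix.posSemidef_diagonal_iff.mpr fun i =>
    Complex.zero_le_real.mpr (ha i)).mul_mul_conjTranspose_same _

lemma norm_sq_sandwich (U : Matrix.unitaryGroup n ℂ) (a : n → ℝ) :
    ‖(U : Matrix n n ℂ) * Matrix.diagonal (fun i => (a i : ℂ)) * star (U : Matrix n n ℂ)‖ ^ 2
      = ∑ i, (a i) ^ 2 := by
  set X := (U : Matrix n n ℂ) * Matrix.diagonal (fun i => (a i : ℂ)) * star (U : Matrix n n ℂ)
    with hX
  have hherm : Xᴴ = X := by
    rw [hX]
    simp only [Matrix.conjTranspose_mul, Matrix.star_eq_conjTranspose,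
      Matrix.conjTranspose_conjTranspose, Matrix.diagonal_conjTranspose]
    rw [Matrix.mul_assoc]
    congr 1
    ext i j
    simp [Pi.star_apply, Matrix.diagonal_apply]
  rw [← trace_mul_ct_re, hherm, hX, sandwich_mul, tr_sandwich]
  rw [Complex.ofReal_re]
  exact Finset.sum_congr rfl fun i _ => (sq (a i)).symm

lemma herm_decomp {H : Matrix n n ℂ} (hH : H.IsHermitian) :
    ∃ P Q : Matrix n n ℂ, P.PosSemidef ∧ Q.PosSemidef ∧ H = P - Q ∧
      ‖P + Q‖ = ‖H‖ ∧ (H ≠ 0 → ∃ c : ℝ, 0 < c ∧ (P + Q).trace = (c : ℂ)) := by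
  set U := hH.eigenvectorUnitary with hU
  set d := hH.eigenvalues with hd
  have hspec : H = (U : Matrix n n ℂ) * Matrix.diagonal (fun i => (d i : ℂ)) *
      star (U : Matrix n n ℂ) := hH.spectral_theorem
  set P := (U : Matrix n n ℂ) * Matrix.diagonal (fun i => ((max (d i) 0 : ℝ) : ℂ)) *
      star (U : Matrix n n ℂ) with hP
  set Q := (U : Matrix n n ℂ) * Matrix.diagonal (fun i => ((max (-d i) 0 : ℝ) : ℂ)) *
      star (U : Matrix n n ℂ) with hQ
  have habs : P + Q = (U : Matrix n n ℂ) * Matrix.diagonal (fun i => ((|d i| : ℝ) : ℂ)) *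
      star (U : Matrix n n ℂ) := by
    rw [hP, hQ, ← add_mul, ← mul_add, Matrix.diagonal_add]
    congr 2
    ext i j
    rcases eq_or_ne i j with rfl | hij
    swap
    · simp [Matrix.diagonal_apply_ne _ hij]
    simp only [Matrix.diagonal_apply_eq]
    rw [← Complex.ofReal_add]
    congr 1
    rcases le_total 0 (d i) with h | h
    · rw [max_eq_left h, max_eq_right (neg_nonpos.mpr h), add_zero, abs_of_nonneg h]
    · rw [max_eq_right h, max_eq_left (neg_nonneg.mpr h), zero_add, abs_of_nonpos h]
  refine ⟨P, Q, sandwich_psd U (fun i => le_max_right _ _),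
    sandwich_psd U (fun i => le_max_right _ _), ?_, ?_, ?_⟩
  · rw [hP, hQ, ← sub_mul, ← mul_sub, Matrix.diagonal_sub, hspec]
    congr 2
    ext i j
    rcases eq_or_ne i j with rfl | hij
    swap
    · simp [Matrix.diagonal_apply_ne _ hij]
    simp only [Matrix.diagonal_apply_eq]
    rw [← Complex.ofReal_sub]
    congr 1
    rcases le_total 0 (d i) with h | h
    · rw [max_eq_left h, max_eq_right (neg_nonpos.mpr h), sub_zero]
    · rw [max_eq_right h, max_eq_left (neg_nonneg.mpr h), zero_sub, neg_neg]
  · have h1 : ‖P + Q‖ ^ 2 = ∑ i, |d i| ^ 2 := by rw [habs]; exact norm_sq_sandwich U _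
    have h2 : ‖H‖ ^ 2 = ∑ i, (d i) ^ 2 := by rw [hspec]; exact norm_sq_sandwich U _
    have h3 : ‖P + Q‖ ^ 2 = ‖H‖ ^ 2 := by
      rw [h1, h2]; exact Finset.sum_congr rfl fun i _ => sq_abs _
    calc ‖P + Q‖ = Real.sqrt (‖P + Q‖ ^ 2) := (Real.sqrt_sq (norm_nonneg _)).symm
      _ = Real.sqrt (‖H‖ ^ 2) := by rw [h3]
      _ = ‖H‖ := Real.sqrt_sq (norm_nonneg _)
  · intro hne
    refine ⟨∑ i, |d i|, ?_, by rw [habs]; exact tr_sandwich U _⟩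
    by_contra hle
    push_neg at hle
    have h0 : ∀ i, |d i| = 0 := by
      intro i
      have := Finset.single_le_sum (f := fun i => |d i|) (fun j _ => abs_nonneg _)
        (Finset.mem_univ i)
      have h0' : (0:ℝ) ≤ |d i| := abs_nonneg _
      linarith
    apply hne
    rw [hspec]
    have : (Matrix.diagonal (fun i => ((d i : ℝ) : ℂ))) = 0 := by
      ext i j
      rcases eq_or_ne i j with rfl | hij
      · simp [Matrix.diagonal_apply_eq, abs_eq_zero.mp (h0 i)]
      · simp [Matrix.diagonal_apply_ne _ hij]
    rw [this, Matrix.mul_zero, Matrix.zero_mul]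

lemma trace_herm_mul_im {X Y : Matrix n n ℂ} (hX : X.IsHermitian) (hY : Y.IsHermitian) :
    ((X * Y).trace).im = 0 := by
  rw [← Complex.conj_eq_iff_im]
  calc (starRingEnd ℂ) ((X * Y).trace) = ((X * Y)ᴴ).trace := (Matrix.trace_conjTranspose _).symm
    _ = (Y * X).trace := by rw [Matrix.conjTranspose_mul, hX.eq, hY.eq]
    _ = (X * Y).trace := Matrix.trace_mul_comm _ _

lemma pyth {H K : Matrix n n ℂ} (hH : H.IsHermitian) (hK : K.IsHermitian) :
    ‖H + Complex.I • K‖ ^ 2 = ‖H‖ ^ 2 + ‖K‖ ^ 2 := by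
  rw [norm_sq_add']
  have h1 : ‖Complex.I • K‖ = ‖K‖ := by
    rw [norm_smul]; simp
  have hct : (Complex.I • K)ᴴ = (-Complex.I) • K := by
    rw [Matrix.conjTranspose_smul, hK.eq]
    congr 1
    simp [Complex.star_def]
  have h2 : ((H * (Complex.I • K)ᴴ).trace).re = 0 := by
    rw [hct, Matrix.mul_smul, Matrix.trace_smul, smul_eq_mul]
    have := trace_herm_mul_im hH hK
    simp [Complex.mul_re, this]
  rw [h1, h2]; ring

lemma herm_parts (M : Matrix n n ℂ) :
    ∃ H K : Matrix n n ℂ, H.IsHermitian ∧ K.IsHermitian ∧ M = H + Complex.I • K := by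
  refine ⟨(2⁻¹ : ℂ) • (M + Mᴴ), (-Complex.I) • ((2⁻¹ : ℂ) • (M - Mᴴ)), ?_, ?_, ?_⟩
  · show _ = _
    rw [Matrix.conjTranspose_smul, Matrix.conjTranspose_add, Matrix.conjTranspose_conjTranspose]
    rw [add_comm Mᴴ M]
    congr 1
    simp [Complex.star_def]
  · show _ = _
    rw [Matrix.conjTranspose_smul, Matrix.conjTranspose_smul, Matrix.conjTranspose_sub,
      Matrix.conjTranspose_conjTranspose]
    rw [smul_smul, smul_smul]
    have : Mᴴ - M = (-1 : ℂ) • (M - Mᴴ) := by simp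
    rw [this, smul_smul]
    congr 1
    simp [Complex.star_def]
  · rw [smul_smul, smul_smul]
    have : Complex.I * -Complex.I * 2⁻¹ = 2⁻¹ := by
      simp [Complex.I_mul_I]
    rw [this, smul_add, smul_sub]
    ext i j
    simp only [Matrix.add_apply, Matrix.sub_apply, Matrix.smul_apply, smul_eq_mul]
    ring

end AuxLemmas

theorem sigma1_eq_sup_over_density_matrices {N : ℕ} (hN : 0 < N)
    (Φ : Matrix (Fin N) (Fin N) ℂ →ₗ[ℂ] Matrix (Fin N) (Fin N) ℂ) (hΦ : IsCPTP Φ) :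
    sigma1 Φ = sSup {r : ℝ | ∃ ρ : Matrix (Fin N) (Fin N) ℂ, IsDensityMatrix ρ ∧
      r = Real.sqrt ((Φ ρ * Φ ρ).trace.re / (ρ * ρ).trace.re)} := by
  obtain ⟨k, A, hKr, hTP⟩ := hΦ
  have hsn : ∀ M : Matrix (Fin N) (Fin N) ℂ, hsNorm M = ‖M‖ := by
    intro M
    show Real.sqrt ((M * Mᴴ).trace.re) = ‖M‖
    rw [trace_mul_ct_re, Real.sqrt_sq (norm_nonneg _)]
  have hct : ∀ X : Matrix (Fin N) (Fin N) ℂ, Φ Xᴴ = (Φ X)ᴴ := by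
    intro X
    rw [hKr, hKr]
    rw [Matrix.conjTranspose_sum]
    refine Finset.sum_congr rfl fun i _ => ?_
    simp [Matrix.conjTranspose_mul, Matrix.mul_assoc]
  have hpsd : ∀ ρ : Matrix (Fin N) (Fin N) ℂ, ρ.PosSemidef → (Φ ρ).PosSemidef := by
    intro ρ h
    rw [hKr]
    exact psd_sum _ fun i => h.mul_mul_conjTranspose_same (A i)
  have hphherm : ∀ X : Matrix (Fin N) (Fin N) ℂ, X.IsHermitian → (Φ X).IsHermitian := by
    intro X hX
    show (Φ X)ᴴ = Φ X
    rw [← hct, hX.eq]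
  set S1 := {r : ℝ | ∃ M : Matrix (Fin N) (Fin N) ℂ, hsNorm M = 1 ∧ r = hsNorm (Φ M)} with hS1
  set S2 := {r : ℝ | ∃ ρ : Matrix (Fin N) (Fin N) ℂ, IsDensityMatrix ρ ∧
      r = Real.sqrt ((Φ ρ * Φ ρ).trace.re / (ρ * ρ).trace.re)} with hS2
  have hval : ∀ ρ : Matrix (Fin N) (Fin N) ℂ, IsDensityMatrix ρ → 0 < ‖ρ‖ ∧
      Real.sqrt ((Φ ρ * Φ ρ).trace.re / (ρ * ρ).trace.re) = ‖Φ ρ‖ / ‖ρ‖ := by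
    rintro ρ ⟨hpos, htr⟩
    have hne : ρ ≠ 0 := by
      intro h
      rw [h] at htr
      simp at htr
    have hnorm : 0 < ‖ρ‖ := norm_pos_iff.mpr hne
    have h1 : (ρ * ρ).trace.re = ‖ρ‖ ^ 2 := by
      have h : ρ * ρ = ρ * ρᴴ := by rw [hpos.1.eq]
      rw [h, trace_mul_ct_re]
    have h2 : (Φ ρ * Φ ρ).trace.re = ‖Φ ρ‖ ^ 2 := by
      have h : Φ ρ * Φ ρ = Φ ρ * (Φ ρ)ᴴ := by rw [(hpsd ρ hpos).1.eq]
      rw [h, trace_mul_ct_re]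
    refine ⟨hnorm, ?_⟩
    rw [h1, h2, ← div_pow, Real.sqrt_sq (by positivity)]
  have hsub : S2 ⊆ S1 := by
    rintro r ⟨ρ, hρ, rfl⟩
    obtain ⟨hnorm, hv⟩ := hval ρ hρ
    refine ⟨((‖ρ‖⁻¹ : ℝ) : ℂ) • ρ, ?_, ?_⟩
    · rw [hsn, norm_smul, Complex.norm_real, Real.norm_eq_abs,
        abs_of_nonneg (inv_nonneg.mpr (norm_nonneg _)), inv_mul_cancel₀ hnorm.ne']
    · rw [hv, _root_.map_smul, hsn, norm_smul, Complex.norm_real, Real.norm_eq_abs,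
        abs_of_nonneg (inv_nonneg.mpr (norm_nonneg _))]
      field_simp
  have hS2ne : S2.Nonempty := by
    refine ⟨_, ⟨Matrix.diagonal (fun _ : Fin N => (((N : ℝ)⁻¹ : ℝ) : ℂ)), ⟨?_, ?_⟩, rfl⟩⟩
    · exact Matrix.posSemidef_diagonal_iff.mpr fun i =>
        Complex.zero_le_real.mpr (by positivity)
    · rw [Matrix.trace_diagonal]
      rw [Finset.sum_const, Finset.card_univ, Fintype.card_fin]
      rw [nsmul_eq_mul]
      rw [← Complex.ofReal_natCast, ← Complex.ofReal_mul]
      rw [mul_inv_cancel₀ (by positivity : (N : ℝ) ≠ 0)]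
      norm_num
  have hS1bdd : BddAbove S1 := by
    refine ⟨∑ i, ‖A i‖ ^ 2, ?_⟩
    rintro r ⟨M, hM, rfl⟩
    rw [hsn] at hM ⊢
    rw [hKr]
    calc ‖∑ i, A i * M * (A i)ᴴ‖ ≤ ∑ i, ‖A i * M * (A i)ᴴ‖ := norm_sum_le _ _
      _ ≤ ∑ i, ‖A i‖ ^ 2 := by
          refine Finset.sum_le_sum fun i _ => ?_
          calc ‖A i * M * (A i)ᴴ‖ ≤ ‖A i * M‖ * ‖(A i)ᴴ‖ := norm_mul_le _ _
            _ ≤ ‖A i‖ * ‖M‖ * ‖(A i)ᴴ‖ :=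
                mul_le_mul_of_nonneg_right (norm_mul_le _ _) (norm_nonneg _)
            _ = ‖A i‖ ^ 2 := by
                rw [Matrix.frobenius_norm_conjTranspose, hM]
                ring
  have hS2bdd : BddAbove S2 := hS1bdd.mono hsub
  set s := sSup S2 with hs
  have hS1ne : S1.Nonempty := hS2ne.mono hsub
  have hs0 : 0 ≤ s := by
    obtain ⟨r, hr⟩ := hS2ne
    have hrt := hr
    obtain ⟨ρ, hρ, rfl⟩ := hrt
    exact le_trans (Real.sqrt_nonneg _) (le_csSup hS2bdd hr)
  have hkey : ∀ ρ : Matrix (Fin N) (Fin N) ℂ, ρ.PosSemidef → ‖Φ ρ‖ ≤ s * ‖ρ‖ := by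
    intro ρ hpos
    rcases eq_or_ne ρ 0 with rfl | hne
    · simp [map_zero]
    have hnorm : 0 < ‖ρ‖ := norm_pos_iff.mpr hne
    -- trace of ρ is a positive real
    have hspec : ρ = (hpos.1.eigenvectorUnitary : Matrix (Fin N) (Fin N) ℂ) *
        Matrix.diagonal (fun i => ((hpos.1.eigenvalues i : ℝ) : ℂ)) *
        star (hpos.1.eigenvectorUnitary : Matrix (Fin N) (Fin N) ℂ) := hpos.1.spectral_theorem
    set d := hpos.1.eigenvalues with hd
    have htr : ρ.trace = ((∑ i, d i : ℝ) : ℂ) := by rw [hspec]; exact tr_sandwich _ _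
    have hnsq : ‖ρ‖ ^ 2 = ∑ i, d i ^ 2 := by rw [hspec]; exact norm_sq_sandwich _ _
    have hcpos : 0 < ∑ i, d i := by
      have h1 : 0 < ∑ i, d i ^ 2 := by rw [← hnsq]; positivity
      obtain ⟨i, -, hi⟩ := Finset.exists_lt_of_sum_lt (by simpa using h1 :
        ∑ _i : Fin N, (0:ℝ) < ∑ i, d i ^ 2)
      have hdi : d i ≠ 0 := by intro h; rw [h] at hi; simp at hi
      have hdi0 : 0 ≤ d i := hpos.eigenvalues_nonneg i
      calc (0:ℝ) < d i := lt_of_le_of_ne hdi0 (Ne.symm hdi)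
        _ ≤ ∑ j, d j := Finset.single_le_sum (fun j _ => hpos.eigenvalues_nonneg j)
            (Finset.mem_univ i)
    set c := ∑ i, d i with hc
    set ρ' := (((c⁻¹ : ℝ)) : ℂ) • ρ with hρ'
    have hdens : IsDensityMatrix ρ' := by
      refine ⟨psd_smul (by positivity) hpos, ?_⟩
      rw [hρ', Matrix.trace_smul, htr, smul_eq_mul, ← Complex.ofReal_mul,
        inv_mul_cancel₀ hcpos.ne']
      norm_num
    obtain ⟨hnorm', hv⟩ := hval ρ' hdens
    have hmem : ‖Φ ρ'‖ / ‖ρ'‖ ∈ S2 := ⟨ρ', hdens, hv.symm⟩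
    have hratio : ‖Φ ρ'‖ / ‖ρ'‖ = ‖Φ ρ‖ / ‖ρ‖ := by
      have e1 : ‖ρ'‖ = c⁻¹ * ‖ρ‖ := by
        rw [hρ', norm_smul, Complex.norm_real, Real.norm_eq_abs,
          abs_of_nonneg (by positivity)]
      have e2 : ‖Φ ρ'‖ = c⁻¹ * ‖Φ ρ‖ := by
        rw [hρ', _root_.map_smul, norm_smul, Complex.norm_real, Real.norm_eq_abs,
          abs_of_nonneg (by positivity)]
      rw [e1, e2]
      rw [mul_div_mul_left _ _ (by positivity : (c : ℝ)⁻¹ ≠ 0)]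
    have : ‖Φ ρ‖ / ‖ρ‖ ≤ s := by
      rw [← hratio]
      exact le_csSup hS2bdd hmem
    calc ‖Φ ρ‖ = (‖Φ ρ‖ / ‖ρ‖) * ‖ρ‖ := by field_simp
      _ ≤ s * ‖ρ‖ := mul_le_mul_of_nonneg_right this (norm_nonneg _)
  have hherm : ∀ H : Matrix (Fin N) (Fin N) ℂ, H.IsHermitian → ‖Φ H‖ ≤ s * ‖H‖ := by
    intro H hH
    rcases eq_or_ne H 0 with rfl | hne
    · simp [map_zero]
    obtain ⟨P, Q, hPp, hQp, hHPQ, hnrm, -⟩ := herm_decomp hH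
    have h1 : ‖Φ H‖ ^ 2 ≤ ‖Φ (P + Q)‖ ^ 2 := by
      have hd : Φ H = Φ P - Φ Q := by rw [hHPQ, map_sub]
      have ha : Φ (P + Q) = Φ P + Φ Q := map_add _ _ _
      rw [hd, ha, norm_sq_sub', norm_sq_add']
      have hcr : 0 ≤ ((Φ P * (Φ Q)ᴴ).trace).re := by
        rw [(hpsd Q hQp).1.eq]
        exact re_trace_mul_nonneg (hpsd P hPp) (hpsd Q hQp)
      linarith
    have h3 : ‖Φ H‖ ≤ ‖Φ (P + Q)‖ := by
      have := Real.sqrt_le_sqrt h1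
      rwa [Real.sqrt_sq (norm_nonneg _), Real.sqrt_sq (norm_nonneg _)] at this
    calc ‖Φ H‖ ≤ ‖Φ (P + Q)‖ := h3
      _ ≤ s * ‖P + Q‖ := hkey _ (hPp.add hQp)
      _ = s * ‖H‖ := by rw [hnrm]
  have hub : ∀ r ∈ S1, r ≤ s := by
    rintro r ⟨M, hM, rfl⟩
    rw [hsn] at hM ⊢
    obtain ⟨H, K, hH, hK, rfl⟩ := herm_parts M
    have e1 : ‖H‖ ^ 2 + ‖K‖ ^ 2 = 1 := by
      rw [← pyth hH hK, hM]; norm_num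
    have e2 : ‖Φ (H + Complex.I • K)‖ ^ 2 = ‖Φ H‖ ^ 2 + ‖Φ K‖ ^ 2 := by
      rw [map_add, _root_.map_smul]
      exact pyth (hphherm H hH) (hphherm K hK)
    have b1 : ‖Φ H‖ ^ 2 ≤ s ^ 2 * ‖H‖ ^ 2 := by
      have := pow_le_pow_left₀ (norm_nonneg _) (hherm H hH) 2
      rw [mul_pow] at this
      linarith
    have b2 : ‖Φ K‖ ^ 2 ≤ s ^ 2 * ‖K‖ ^ 2 := by
      have := pow_le_pow_left₀ (norm_nonneg _) (hherm K hK) 2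
      rw [mul_pow] at this
      linarith
    have hsq : ‖Φ (H + Complex.I • K)‖ ^ 2 ≤ s ^ 2 := by
      rw [e2]
      calc ‖Φ H‖ ^ 2 + ‖Φ K‖ ^ 2 ≤ s ^ 2 * ‖H‖ ^ 2 + s ^ 2 * ‖K‖ ^ 2 := by linarith
        _ = s ^ 2 * (‖H‖ ^ 2 + ‖K‖ ^ 2) := by ring
        _ = s ^ 2 := by rw [e1, mul_one]
    have := Real.sqrt_le_sqrt hsq
    rwa [Real.sqrt_sq (norm_nonneg _), Real.sqrt_sq hs0] at this
  exact le_antisymm (csSup_le hS1ne hub) (csSup_le_csSup hS1bdd hS2ne hsub)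
end
end

section
/- For any CPTP map Φ on a Hilbert space of dimension N, and any matrix M with ‖M‖_HS = 1, there exists a positive semidefinite matrix P with ‖P‖_HS = 1 such that ‖Φ(M)‖_HS ≤ ‖Φ(P)‖_HS. -/
open Matrix
open scoped BigOperators Kronecker ComplexOrder

noncomputable section

namespace ChannelAux

set_option linter.unusedSectionVars false

variable {n : Type*} [Fintype n] [DecidableEq n]

lemma trace_psd_nonneg {A : Matrix n n ℂ} (hA : A.PosSemidef) : 0 ≤ A.trace.re := by
  rw [Matrix.trace]
  simp only [Complex.re_sum]
  apply Finset.sum_nonneg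
  intro i _
  have h1 := hA.dotProduct_mulVec_nonneg (Pi.single i 1)
  have h2 : star (Pi.single i 1) ⬝ᵥ (A *ᵥ Pi.single i 1) = A i i := by
    simp [Matrix.mulVec_single, dotProduct, Pi.single_apply]
  rw [h2] at h1
  exact (Complex.le_def.mp h1).1

lemma trace_mul_psd_nonneg {A B : Matrix n n ℂ} (hA : A.PosSemidef) (hB : B.PosSemidef) :
    0 ≤ (A * B).trace.re := by
  obtain ⟨C, hC⟩ : ∃ C : Matrix n n ℂ, A = Cᴴ * C := by
    open scoped MatrixOrder in
    exact CStarAlgebra.nonneg_iff_eq_star_mul_self.mp hA.nonneg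
  have h2 : (A * B).trace = (C * B * Cᴴ).trace := by
    rw [hC, Matrix.mul_assoc Cᴴ C B, Matrix.trace_mul_comm Cᴴ]
  rw [h2]
  have h3 : (C * B * Cᴴ).PosSemidef := hB.mul_mul_conjTranspose_same C
  exact trace_psd_nonneg h3

/-- squared HS norm -/
def n2 (X : Matrix n n ℂ) : ℝ := ((X * Xᴴ).trace).re

lemma hsNorm_eq_n2 (X : Matrix n n ℂ) : hsNorm X = Real.sqrt (n2 X) := rfl

lemma n2_nonneg (X : Matrix n n ℂ) : 0 ≤ n2 X :=
  trace_psd_nonneg (posSemidef_self_mul_conjTranspose X)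

lemma n2_zero : n2 (0 : Matrix n n ℂ) = 0 := by simp [n2]

lemma n2_add (A B : Matrix n n ℂ) :
    n2 (A + B) = n2 A + n2 B + 2 * ((A * Bᴴ).trace).re := by
  have h : (B * Aᴴ).trace = star ((A * Bᴴ).trace) := by
    rw [← Matrix.trace_conjTranspose, conjTranspose_mul, conjTranspose_conjTranspose]
  have hre : (star ((A * Bᴴ).trace)).re = ((A * Bᴴ).trace).re := rfl
  simp only [n2, conjTranspose_add, add_mul, mul_add, Matrix.trace_add, Complex.add_re, h, hre]
  ring

lemma n2_sub (A B : Matrix n n ℂ) :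
    n2 (A - B) = n2 A + n2 B - 2 * ((A * Bᴴ).trace).re := by
  have h0 := n2_add A (-B)
  have h1 : n2 (-B) = n2 B := by simp [n2]
  have h2 : (A * (-B)ᴴ).trace.re = -((A * Bᴴ).trace.re) := by
    simp [conjTranspose_neg, Matrix.mul_neg]
  rw [← sub_eq_add_neg] at h0
  rw [h0, h1, h2]; ring

lemma n2_smul (r : ℝ) (X : Matrix n n ℂ) : n2 ((r : ℂ) • X) = r ^ 2 * n2 X := by
  simp only [n2, conjTranspose_smul, Matrix.smul_mul, Matrix.mul_smul, Matrix.trace_smul,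
    smul_smul, Complex.star_def, Complex.conj_ofReal, smul_eq_mul]
  rw [← Complex.ofReal_mul, Complex.re_ofReal_mul]
  ring

lemma n2_eq_sum (X : Matrix n n ℂ) : n2 X = ∑ i, ∑ j, Complex.normSq (X i j) := by
  simp only [n2, Matrix.trace, Matrix.diag_apply, Matrix.mul_apply, conjTranspose_apply,
    Complex.re_sum]
  congr 1; ext i; congr 1; ext j
  rw [Complex.star_def, Complex.mul_conj]
  simp

lemma n2_eq_zero {X : Matrix n n ℂ} (h : n2 X = 0) : X = 0 := by
  rw [n2_eq_sum] at h
  ext i j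
  have h1 : ∀ i ∈ Finset.univ, (0:ℝ) ≤ ∑ j, Complex.normSq (X i j) :=
    fun i _ => Finset.sum_nonneg fun j _ => Complex.normSq_nonneg _
  have h2 := (Finset.sum_eq_zero_iff_of_nonneg h1).mp h i (Finset.mem_univ i)
  have h3 := (Finset.sum_eq_zero_iff_of_nonneg
    (fun j _ => Complex.normSq_nonneg (X i j))).mp h2 j (Finset.mem_univ j)
  simpa using Complex.normSq_eq_zero.mp h3

lemma psd_smul {Q : Matrix n n ℂ} (hQ : Q.PosSemidef) {r : ℝ} (hr : 0 ≤ r) :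
    ((r : ℂ) • Q).PosSemidef := by
  constructor
  · rw [Matrix.IsHermitian, conjTranspose_smul, Complex.star_def, Complex.conj_ofReal, hQ.1.eq]
  · exact (hQ.smul (Complex.zero_le_real.mpr hr)).2

lemma max_sub_max (x : ℝ) : max x 0 - max (-x) 0 = x := by
  rcases le_total x 0 with h | h
  · simp [max_eq_right h, max_eq_left (neg_nonneg.mpr h)]
  · simp [max_eq_left h, max_eq_right (neg_nonpos.mpr h)]

lemma max_mul_max (x : ℝ) : max x 0 * max (-x) 0 = 0 := by
  rcases le_total x 0 with h | h
  · simp [max_eq_right h]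
  · simp [max_eq_right (neg_nonpos.mpr h)]

lemma herm_decomp (H : Matrix n n ℂ) (hH : H.IsHermitian) :
    ∃ P Q : Matrix n n ℂ, P.PosSemidef ∧ Q.PosSemidef ∧ H = P - Q ∧ P * Q = 0 := by
  set U : Matrix n n ℂ := (hH.eigenvectorUnitary : Matrix n n ℂ) with hU
  set Dp : Matrix n n ℂ := diagonal (fun i => ((max (hH.eigenvalues i) 0 : ℝ) : ℂ)) with hDp
  set Dm : Matrix n n ℂ := diagonal (fun i => ((max (-hH.eigenvalues i) 0 : ℝ) : ℂ)) with hDm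
  have hUU : star U * U = 1 := Matrix.mem_unitaryGroup_iff'.mp hH.eigenvectorUnitary.2
  have hDpPsd : Dp.PosSemidef :=
    Matrix.PosSemidef.diagonal fun i => Complex.zero_le_real.mpr (le_max_right _ _)
  have hDmPsd : Dm.PosSemidef :=
    Matrix.PosSemidef.diagonal fun i => Complex.zero_le_real.mpr (le_max_right _ _)
  refine ⟨U * Dp * star U, U * Dm * star U, ?_, ?_, ?_, ?_⟩
  · simpa [Matrix.star_eq_conjTranspose] using hDpPsd.mul_mul_conjTranspose_same U
  · simpa [Matrix.star_eq_conjTranspose] using hDmPsd.mul_mul_conjTranspose_same U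
  · have hdiff : Dp - Dm = diagonal (RCLike.ofReal ∘ hH.eigenvalues) := by
      rw [hDp, hDm, diagonal_sub]
      refine congrArg diagonal (funext fun i => ?_)
      rw [← Complex.ofReal_sub, max_sub_max]
      rfl
    rw [show U * Dp * star U - U * Dm * star U = U * (Dp - Dm) * star U by noncomm_ring,
      hdiff]
    exact hH.spectral_theorem
  · have hDD : Dp * Dm = 0 := by
      rw [hDp, hDm, diagonal_mul_diagonal]
      refine (congrArg diagonal (funext fun i => ?_)).trans diagonal_zero
      rw [← Complex.ofReal_mul, max_mul_max, Complex.ofReal_zero]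
    calc U * Dp * star U * (U * Dm * star U)
        = U * Dp * (star U * U) * Dm * star U := by noncomm_ring
      _ = U * (Dp * Dm) * star U := by rw [hUU]; noncomm_ring
      _ = 0 := by rw [hDD]; simp

lemma trace_herm_mul_real {H K : Matrix n n ℂ} (hH : H.IsHermitian) (hK : K.IsHermitian) :
    ((H * K).trace).im = 0 := by
  have h : star ((H * K).trace) = (H * K).trace := by
    rw [← Matrix.trace_conjTranspose, conjTranspose_mul, hH.eq, hK.eq, Matrix.trace_mul_comm]
  rw [Complex.star_def] at h
  exact Complex.conj_eq_iff_im.mp h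

lemma I_smul_conjTranspose_herm {K : Matrix n n ℂ} (hK : K.IsHermitian) :
    (Complex.I • K)ᴴ = (-Complex.I) • K := by
  rw [conjTranspose_smul, Complex.star_def, Complex.conj_I, hK.eq]

lemma n2_I_smul (K : Matrix n n ℂ) (hK : K.IsHermitian) : n2 (Complex.I • K) = n2 K := by
  unfold n2
  rw [I_smul_conjTranspose_herm hK, Matrix.smul_mul, Matrix.mul_smul, smul_smul]
  norm_num [Complex.I_mul_I, hK.eq]

lemma cross_zero {H K : Matrix n n ℂ} (hH : H.IsHermitian) (hK : K.IsHermitian) :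
    ((H * (Complex.I • K)ᴴ).trace).re = 0 := by
  rw [I_smul_conjTranspose_herm hK, Matrix.mul_smul, Matrix.trace_smul]
  have him := trace_herm_mul_real hH hK
  simp [Complex.mul_re, him]

lemma n2_herm_add (H K : Matrix n n ℂ) (hH : H.IsHermitian) (hK : K.IsHermitian) :
    n2 (H + Complex.I • K) = n2 H + n2 K := by
  rw [n2_add, n2_I_smul K hK, cross_zero hH hK]
  ring

end ChannelAux

open ChannelAux in
theorem exists_posSemidef_maximizer {N : ℕ} (hN : 0 < N)
    (Φ : Matrix (Fin N) (Fin N) ℂ →ₗ[ℂ] Matrix (Fin N) (Fin N) ℂ) (hΦ : IsCPTP Φ)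
    (M : Matrix (Fin N) (Fin N) ℂ) (hM : hsNorm M = 1) :
    ∃ P : Matrix (Fin N) (Fin N) ℂ, P.PosSemidef ∧ hsNorm P = 1 ∧
      hsNorm (Φ M) ≤ hsNorm (Φ P) := by
  classical
  obtain ⟨k, A, hKr, htp⟩ := hΦ
  have hpsd : ∀ ρ : Matrix (Fin N) (Fin N) ℂ, ρ.PosSemidef → (Φ ρ).PosSemidef := by
    intro ρ hρ
    rw [hKr]
    refine Finset.sum_induction _ _ (fun a b ha hb => ha.add hb) Matrix.PosSemidef.zero ?_
    intro i _
    exact hρ.mul_mul_conjTranspose_same (A i)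
  have hct : ∀ X, Φ Xᴴ = (Φ X)ᴴ := by
    intro X
    rw [hKr, hKr, conjTranspose_sum]
    refine Finset.sum_congr rfl fun i _ => ?_
    simp [conjTranspose_mul, Matrix.mul_assoc]
  have herm_step : ∀ H : Matrix (Fin N) (Fin N) ℂ, H.IsHermitian →
      ∃ P, P.PosSemidef ∧ n2 P = n2 H ∧ n2 (Φ H) ≤ n2 (Φ P) := by
    intro H hH
    obtain ⟨P, Q, hP, hQ, hHPQ, hPQ⟩ := herm_decomp H hH
    refine ⟨P + Q, hP.add hQ, ?_, ?_⟩
    · rw [hHPQ, n2_add, n2_sub]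
      have h0 : ((P * Qᴴ).trace).re = 0 := by rw [hQ.1.eq, hPQ]; simp
      rw [h0]; ring
    · rw [hHPQ, map_sub, map_add, n2_add, n2_sub]
      have hre : 0 ≤ ((Φ P * (Φ Q)ᴴ).trace).re := by
        rw [← hct Q, hQ.1.eq]
        exact trace_mul_psd_nonneg (hpsd P hP) (hpsd Q hQ)
      linarith
  -- decompose M into Hermitian and anti-Hermitian parts
  set H := ((1:ℂ)/2) • (M + Mᴴ) with hHdef
  set K := (Complex.I/2) • (Mᴴ - M) with hKdef
  have hHh : H.IsHermitian := by
    rw [Matrix.IsHermitian, hHdef, conjTranspose_smul, conjTranspose_add,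
      conjTranspose_conjTranspose]
    rw [show star ((1:ℂ)/2) = (1:ℂ)/2 by simp, add_comm]
  have hKh : K.IsHermitian := by
    rw [Matrix.IsHermitian, hKdef, conjTranspose_smul, conjTranspose_sub,
      conjTranspose_conjTranspose]
    rw [show star (Complex.I/2) = -(Complex.I/2) by
      simp [Complex.star_def, map_div₀, Complex.conj_I, neg_div]]
    rw [neg_smul, ← smul_neg, neg_sub]
  have hM_eq : M = H + Complex.I • K := by
    rw [hHdef, hKdef, smul_smul]
    rw [show Complex.I * (Complex.I/2) = -((1:ℂ)/2) by
      rw [mul_div_assoc', Complex.I_mul_I, neg_div]]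
    module
  have hΦHh : (Φ H).IsHermitian := by rw [Matrix.IsHermitian, ← hct, hHh.eq]
  have hΦKh : (Φ K).IsHermitian := by rw [Matrix.IsHermitian, ← hct, hKh.eq]
  have hsum1 : n2 H + n2 K = 1 := by
    have hM1 : n2 M = 1 := by
      have h := hM
      rw [hsNorm_eq_n2] at h
      nlinarith [Real.sq_sqrt (n2_nonneg M), n2_nonneg M]
    rw [← hM1, hM_eq, n2_herm_add H K hHh hKh]
  have hΦM : n2 (Φ M) = n2 (Φ H) + n2 (Φ K) := by
    rw [hM_eq, map_add, Φ.map_smul Complex.I K, n2_herm_add _ _ hΦHh hΦKh]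
  obtain ⟨P₁, hP₁, hn₁, hle₁⟩ := herm_step H hHh
  obtain ⟨P₂, hP₂, hn₂, hle₂⟩ := herm_step K hKh
  have final : ∀ Q : Matrix (Fin N) (Fin N) ℂ, Q.PosSemidef → ∀ t : ℝ, n2 Q = t → 0 < t →
      n2 (Φ M) * t ≤ n2 (Φ Q) →
      ∃ P, P.PosSemidef ∧ hsNorm P = 1 ∧ hsNorm (Φ M) ≤ hsNorm (Φ P) := by
    intro Q hQ t ht htpos hle
    have hsq : (0:ℝ) < Real.sqrt t := Real.sqrt_pos.mpr htpos
    have hc2 : ((Real.sqrt t)⁻¹) ^ 2 = t⁻¹ := by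
      rw [inv_pow, Real.sq_sqrt htpos.le]
    refine ⟨(((Real.sqrt t)⁻¹ : ℝ) : ℂ) • Q, psd_smul hQ (inv_nonneg.mpr hsq.le), ?_, ?_⟩
    · rw [hsNorm_eq_n2, n2_smul, ht, hc2, inv_mul_cancel₀ htpos.ne', Real.sqrt_one]
    · rw [hsNorm_eq_n2, hsNorm_eq_n2]
      apply Real.sqrt_le_sqrt
      rw [Φ.map_smul ((((Real.sqrt t)⁻¹ : ℝ)) : ℂ) Q, n2_smul, hc2]
      calc n2 (Φ M) = n2 (Φ M) * t * t⁻¹ := by field_simp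
        _ ≤ n2 (Φ Q) * t⁻¹ :=
          mul_le_mul_of_nonneg_right hle (inv_nonneg.mpr htpos.le)
        _ = t⁻¹ * n2 (Φ Q) := by ring
  rcases eq_or_lt_of_le (n2_nonneg H) with hα | hα
  · -- n2 H = 0
    have hH0 : n2 (Φ H) = 0 := by
      have hp0 : P₁ = 0 := n2_eq_zero (by rw [hn₁, ← hα])
      have hΦ0 : Φ P₁ = 0 := by rw [hp0, map_zero]
      have h1 := hle₁
      rw [hΦ0, n2_zero] at h1
      exact le_antisymm h1 (n2_nonneg _)
    have hβ1 : n2 K = 1 := by rw [← hα] at hsum1; linarith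
    refine final P₂ hP₂ 1 (by rw [hn₂, hβ1]) one_pos ?_
    rw [mul_one, hΦM, hH0, zero_add]
    exact hle₂
  · rcases eq_or_lt_of_le (n2_nonneg K) with hβ | hβ
    · have hK0 : n2 (Φ K) = 0 := by
        have hp0 : P₂ = 0 := n2_eq_zero (by rw [hn₂, ← hβ])
        have hΦ0 : Φ P₂ = 0 := by rw [hp0, map_zero]
        have h1 := hle₂
        rw [hΦ0, n2_zero] at h1
        exact le_antisymm h1 (n2_nonneg _)
      have hα1 : n2 H = 1 := by rw [← hβ] at hsum1; linarith
      refine final P₁ hP₁ 1 (by rw [hn₁, hα1]) one_pos ?_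
      rw [mul_one, hΦM, hK0, add_zero]
      exact hle₁
    · by_cases hcmp : n2 (Φ P₂) * n2 H ≤ n2 (Φ P₁) * n2 K
      · refine final P₁ hP₁ (n2 H) hn₁ hα ?_
        rw [hΦM]
        nlinarith [hle₁, hle₂, n2_nonneg (Φ P₁), n2_nonneg (Φ P₂)]
      · push_neg at hcmp
        refine final P₂ hP₂ (n2 K) hn₂ hβ ?_
        rw [hΦM]
        nlinarith [hle₁, hle₂, n2_nonneg (Φ P₁), n2_nonneg (Φ P₂)]


end
end

section
/- For any CPTP map Φ acting on an N-dimensional quantum system, the sum of the von Neumann entropy of the normalized Choi matrix and the Shannon entropy of the normalized singular values of the superoperator is at least ln N: S^map(Φ) + S^rec(Φ) ≥ ln N. -/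
open Matrix
open scoped BigOperators Kronecker ComplexOrder

noncomputable section

namespace EntAux

lemma conj_mul_self (z : ℂ) : star z * z = ((‖z‖^2 : ℝ) : ℂ) := by
  rw [mul_comm, ← starRingEnd_apply, Complex.mul_conj]
  simp [Complex.normSq_eq_norm_sq]

variable {ι κ : Type*} [Fintype ι] [Fintype κ]

def nsq (x : ι → ℂ) : ℝ := ∑ i, ‖x i‖^2
def fro (B : Matrix ι κ ℂ) : ℝ := ∑ i, ∑ j, ‖B i j‖^2

lemma sum_conj_mul_self (x : ι → ℂ) : ∑ i, star (x i) * x i = ((nsq x : ℝ) : ℂ) := by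
  unfold nsq
  rw [Complex.ofReal_sum]
  exact Finset.sum_congr rfl fun i _ => conj_mul_self _

lemma trace_mul_conjTranspose (B : Matrix ι κ ℂ) : (B * Bᴴ).trace = ((fro B : ℝ) : ℂ) := by
  unfold fro
  rw [Complex.ofReal_sum, Matrix.trace]
  refine Finset.sum_congr rfl fun i _ => ?_
  rw [Complex.ofReal_sum]
  simp only [Matrix.diag_apply, Matrix.mul_apply, Matrix.conjTranspose_apply]
  refine Finset.sum_congr rfl fun j _ => ?_
  rw [mul_comm, conj_mul_self]

variable [DecidableEq ι]

lemma trace_eq_sum_eigenvalues {B : Matrix ι ι ℂ} (hB : B.IsHermitian) :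
    B.trace = ((∑ i, hB.eigenvalues i : ℝ) : ℂ) := by
  conv_lhs => rw [hB.spectral_theorem]
  rw [Unitary.conjStarAlgAut_apply, Matrix.trace_mul_cycle, Unitary.coe_star_mul_self, one_mul, Matrix.trace_diagonal]
  simp [Complex.ofReal_sum]

lemma sv_nonneg (X : Matrix ι ι ℂ) (i : ι) : 0 ≤ singularValues X i := Real.sqrt_nonneg _

lemma sum_sv_sq (X : Matrix ι ι ℂ) : ∑ i, singularValues X i ^ 2 = fro X := by
  have h1 : ∀ i, singularValues X i ^ 2
      = (Matrix.posSemidef_self_mul_conjTranspose X).1.eigenvalues i := fun i =>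
    Real.sq_sqrt ((Matrix.posSemidef_self_mul_conjTranspose X).eigenvalues_nonneg i)
  have h2 := trace_eq_sum_eigenvalues (Matrix.posSemidef_self_mul_conjTranspose X).1
  rw [trace_mul_conjTranspose] at h2
  have h3 := Complex.ofReal_injective h2
  simp only [h1]
  exact h3.symm


lemma unitary_col_nsq (U : Matrix ι ι ℂ) (hU : star U * U = 1) (i : ι) :
    nsq (fun q => U q i) = 1 := by
  have h : (star U * U) i i = 1 := by rw [hU]; simp
  rw [Matrix.mul_apply] at h
  simp only [Matrix.star_apply] at h
  rw [show (∑ j, star (U j i) * U j i) = ((nsq (fun q => U q i) : ℝ) : ℂ) from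
    sum_conj_mul_self _] at h
  exact_mod_cast h

lemma col_mul_eq_mulVec (B : Matrix ι κ ℂ) (U : Matrix κ κ ℂ) (i : κ) :
    (fun p => (B * U) p i) = B *ᵥ (fun q => U q i) := by
  funext p
  simp [Matrix.mul_apply, Matrix.mulVec, dotProduct]

lemma eigenvalue_XXH_eq (X : Matrix ι ι ℂ) (i : ι) :
    (Matrix.posSemidef_self_mul_conjTranspose X).1.eigenvalues i
      = nsq (Xᴴ *ᵥ (fun q => ((Matrix.posSemidef_self_mul_conjTranspose X).1.eigenvectorUnitary
          : Matrix ι ι ℂ) q i)) := by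
  set h1 := (Matrix.posSemidef_self_mul_conjTranspose X).1 with hh1
  set U := (h1.eigenvectorUnitary : Matrix ι ι ℂ) with hU
  have hd : star U * (X * Xᴴ) * U = diagonal (RCLike.ofReal ∘ h1.eigenvalues) := by
    have := h1.conjStarAlgAut_star_eigenvectorUnitary; rwa [Unitary.conjStarAlgAut_star_apply] at this
  have hentry := congrFun (congrFun hd i) i
  rw [Matrix.diagonal_apply_eq] at hentry
  have hsplit : star U * (X * Xᴴ) * U = (Xᴴ * U)ᴴ * (Xᴴ * U) := by
    rw [Matrix.conjTranspose_mul, Matrix.conjTranspose_conjTranspose,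
      ← Matrix.star_eq_conjTranspose U]
    noncomm_ring
  rw [hsplit] at hentry
  rw [Matrix.mul_apply] at hentry
  simp only [Matrix.conjTranspose_apply, Matrix.star_apply] at hentry
  rw [show (∑ j, star ((Xᴴ * U) j i) * (Xᴴ * U) j i)
      = ((nsq (fun j => (Xᴴ * U) j i) : ℝ) : ℂ) from sum_conj_mul_self _] at hentry
  rw [col_mul_eq_mulVec] at hentry
  have : ((nsq (Xᴴ *ᵥ fun q => U q i) : ℝ) : ℂ) = ((h1.eigenvalues i : ℝ) : ℂ) := by
    rw [hentry]; simp [Function.comp]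
  exact (Complex.ofReal_injective this).symm


lemma sv_sq_le_of_bound (X : Matrix ι ι ℂ) (C : ℝ)
    (h : ∀ u : ι → ℂ, nsq (Xᴴ *ᵥ u) ≤ C * nsq u) (i : ι) :
    singularValues X i ^ 2 ≤ C := by
  have h1 : singularValues X i ^ 2
      = (Matrix.posSemidef_self_mul_conjTranspose X).1.eigenvalues i :=
    Real.sq_sqrt ((Matrix.posSemidef_self_mul_conjTranspose X).eigenvalues_nonneg i)
  rw [h1, eigenvalue_XXH_eq]
  have h2 := h (fun q => ((Matrix.posSemidef_self_mul_conjTranspose X).1.eigenvectorUnitary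
    : Matrix ι ι ℂ) q i)
  rw [unitary_col_nsq _ (Unitary.coe_star_mul_self _) i, mul_one] at h2
  exact h2

lemma re_trace_le_sum_sv (D : Matrix ι ι ℂ) :
    D.trace.re ≤ ∑ i, singularValues D i := by
  set h1 := (Matrix.posSemidef_self_mul_conjTranspose D).1 with hh1
  set U := (h1.eigenvectorUnitary : Matrix ι ι ℂ) with hUdef
  have hUU : U * star U = 1 := Unitary.coe_mul_star_self _
  set Y := star U * D * U with hY
  have htr : D.trace = Y.trace := by
    rw [hY, Matrix.trace_mul_cycle, hUU, one_mul]
  have hUUh : U * Uᴴ = 1 := by rw [← Matrix.star_eq_conjTranspose]; exact hUU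
  have hYY : Y * Yᴴ = star U * (D * Dᴴ) * U := by
    have hYH : Yᴴ = Uᴴ * Dᴴ * U := by
      rw [hY, Matrix.star_eq_conjTranspose]
      simp only [Matrix.conjTranspose_mul, Matrix.conjTranspose_conjTranspose]
      noncomm_ring
    have step : Y * Yᴴ = Uᴴ * D * (U * Uᴴ) * (Dᴴ * U) := by
      rw [hY, hYH, Matrix.star_eq_conjTranspose]
      noncomm_ring
    rw [step, hUUh, mul_one, Matrix.star_eq_conjTranspose]
    noncomm_ring
  have hdiag : star U * (D * Dᴴ) * U = diagonal (RCLike.ofReal ∘ h1.eigenvalues) := by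
    have := h1.conjStarAlgAut_star_eigenvectorUnitary; rwa [Unitary.conjStarAlgAut_star_apply] at this
  have hrow : ∀ i, ∑ q, ‖Y i q‖^2 = h1.eigenvalues i := by
    intro i
    have hentry := congrFun (congrFun (hYY.trans hdiag) i) i
    rw [Matrix.diagonal_apply_eq, Matrix.mul_apply] at hentry
    simp only [Matrix.conjTranspose_apply] at hentry
    have : ∑ j, Y i j * star (Y i j) = ((∑ q, ‖Y i q‖^2 : ℝ) : ℂ) := by
      rw [Complex.ofReal_sum]
      exact Finset.sum_congr rfl fun j _ => by rw [mul_comm, conj_mul_self]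
    rw [this] at hentry
    have : ((∑ q, ‖Y i q‖^2 : ℝ) : ℂ) = ((h1.eigenvalues i : ℝ) : ℂ) := by
      rw [hentry]; simp [Function.comp]
    exact Complex.ofReal_injective this
  have hdd : ∀ i, (Y i i).re ≤ singularValues D i := by
    intro i
    have h2 : ‖Y i i‖^2 ≤ ∑ q, ‖Y i q‖^2 :=
      Finset.single_le_sum (fun q _ => sq_nonneg ‖Y i q‖) (Finset.mem_univ i)
    rw [hrow i] at h2
    have h3 : ‖Y i i‖ ≤ singularValues D i := by
      rw [singularValues]
      exact Real.le_sqrt_of_sq_le h2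
    exact (Complex.re_le_norm _).trans h3
  calc D.trace.re = Y.trace.re := by rw [htr]
    _ = ∑ i, (Y i i).re := by
        rw [Matrix.trace]
        exact Complex.re_sum _ _
    _ ≤ ∑ i, singularValues D i := Finset.sum_le_sum fun i _ => hdd i


lemma nsq_nonneg (x : ι → ℂ) : 0 ≤ nsq x := Finset.sum_nonneg fun _ _ => sq_nonneg _

lemma fro_nonneg (B : Matrix ι κ ℂ) : 0 ≤ fro B :=
  Finset.sum_nonneg fun _ _ => Finset.sum_nonneg fun _ _ => sq_nonneg _

lemma fro_conjTranspose (B : Matrix ι κ ℂ) : fro Bᴴ = fro B := by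
  unfold fro
  rw [Finset.sum_comm]
  simp [Matrix.conjTranspose_apply]

lemma quad_trick {c K : ℝ} (hc : 0 ≤ c) (hK : 0 ≤ K) (h : c^2 ≤ K * c) : c ≤ K := by
  rcases hc.eq_or_lt with h0 | h0
  · rw [← h0]; exact hK
  · refine le_of_mul_le_mul_right ?_ h0
    rwa [← pow_two]

lemma abs_sum_le_sqrt_mul_sqrt (f g : ι → ℂ) :
    ‖∑ i, star (f i) * g i‖ ≤ Real.sqrt (nsq f) * Real.sqrt (nsq g) := by
  have h1 : ‖∑ i, star (f i) * g i‖ ≤ ∑ i, ‖f i‖ * ‖g i‖ := by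
    refine (norm_sum_le _ _).trans (Finset.sum_le_sum fun i _ => ?_)
    rw [norm_mul, norm_star]
  refine h1.trans ?_
  rw [← Real.sqrt_mul (nsq_nonneg f)]
  rw [Real.le_sqrt (Finset.sum_nonneg fun i _ => mul_nonneg (norm_nonneg _) (norm_nonneg _))
    (mul_nonneg (nsq_nonneg f) (nsq_nonneg g))]
  exact Finset.sum_mul_sq_le_sq_mul_sq _ _ _

lemma nsq_mulVec_le (B : Matrix ι κ ℂ) (x : κ → ℂ) :
    nsq (B *ᵥ x) ≤ fro B * nsq x := by
  unfold nsq fro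
  rw [Finset.sum_mul]
  refine Finset.sum_le_sum fun i _ => ?_
  have h1 : ‖(B *ᵥ x) i‖ ≤ ∑ j, ‖B i j‖ * ‖x j‖ := by
    simp only [Matrix.mulVec, dotProduct]
    exact (norm_sum_le _ _).trans (Finset.sum_le_sum fun j _ => (norm_mul _ _).le)
  calc ‖(B *ᵥ x) i‖^2 ≤ (∑ j, ‖B i j‖ * ‖x j‖)^2 := by
        exact pow_le_pow_left₀ (norm_nonneg _) h1 2
    _ ≤ (∑ j, ‖B i j‖^2) * (∑ j, ‖x j‖^2) := Finset.sum_mul_sq_le_sq_mul_sq _ _ _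

lemma adjoint_sum (B : Matrix ι κ ℂ) (u : ι → ℂ) (v : κ → ℂ) :
    ∑ p, star (u p) * (B *ᵥ v) p = ∑ q, star ((Bᴴ *ᵥ u) q) * v q := by
  simp only [Matrix.mulVec, dotProduct, Matrix.conjTranspose_apply, Finset.mul_sum,
    star_sum, star_mul', star_star, Finset.sum_mul]
  rw [Finset.sum_comm]
  refine Finset.sum_congr rfl fun q _ => Finset.sum_congr rfl fun p _ => by ring

section Kraus

variable {N k : ℕ} {A : Fin k → Matrix (Fin N) (Fin N) ℂ}

lemma sum_fro_eq (hA : ∑ i, (A i)ᴴ * A i = 1) : ∑ i, fro (A i) = (N : ℝ) := by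
  have h := congrArg Matrix.trace hA
  rw [Matrix.trace_sum] at h
  have h2 : ∀ i : Fin k, ((A i)ᴴ * A i).trace = ((fro (A i) : ℝ) : ℂ) := fun i => by
    rw [Matrix.trace_mul_comm, trace_mul_conjTranspose]
  rw [Finset.sum_congr rfl (fun i _ => h2 i), Matrix.trace_one] at h
  rw [← Complex.ofReal_sum, Fintype.card_fin] at h
  exact_mod_cast h

lemma kraus_sum_nsq_le (hA : ∑ i, (A i)ᴴ * A i = 1) (y : Fin N → ℂ) :
    ∑ i, nsq ((A i)ᴴ *ᵥ y) ≤ (N : ℝ) * nsq y := by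
  calc ∑ i, nsq ((A i)ᴴ *ᵥ y) ≤ ∑ i, fro (A i)ᴴ * nsq y :=
        Finset.sum_le_sum fun i _ => nsq_mulVec_le _ _
    _ = (∑ i, fro (A i)) * nsq y := by
        rw [Finset.sum_mul]
        exact Finset.sum_congr rfl fun i _ => by rw [fro_conjTranspose]
    _ = (N : ℝ) * nsq y := by rw [sum_fro_eq hA]

lemma channel_col_bound (hA : ∑ i, (A i)ᴴ * A i = 1) (M : Matrix (Fin N) (Fin N) ℂ) (j : Fin N) :
    nsq (fun p => (∑ i, A i * M * (A i)ᴴ) p j)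
      ≤ (N : ℝ) * ∑ i, nsq (fun q => (M * (A i)ᴴ) q j) := by
  set w : Fin N → ℂ := fun p => (∑ i, A i * M * (A i)ᴴ) p j with hw
  set Q : ℝ := ∑ i, nsq (fun q => (M * (A i)ᴴ) q j) with hQ
  have hQ0 : 0 ≤ Q := Finset.sum_nonneg fun _ _ => nsq_nonneg _
  -- w = ∑ i, A i *ᵥ (column of M * (A i)ᴴ)
  have hwi : ∀ p, w p = ∑ i, (A i *ᵥ (fun q => (M * (A i)ᴴ) q j)) p := by
    intro p
    rw [hw]
    simp only [Matrix.sum_apply]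
    refine Finset.sum_congr rfl fun i _ => ?_
    rw [← col_mul_eq_mulVec (A i) (M * (A i)ᴴ) j]
    rw [← mul_assoc]
  set F : Fin k × Fin N → ℂ := fun x => ((A x.1)ᴴ *ᵥ w) x.2 with hF
  set G : Fin k × Fin N → ℂ := fun x => (M * (A x.1)ᴴ) x.2 j with hG
  -- key identity
  have hkey : ((nsq w : ℝ) : ℂ) = ∑ x : Fin k × Fin N, star (F x) * G x := by
    rw [← sum_conj_mul_self w, Fintype.sum_prod_type]
    calc ∑ p, star (w p) * w p
        = ∑ p, ∑ i, star (w p) * (A i *ᵥ (fun q => (M * (A i)ᴴ) q j)) p := by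
          refine Finset.sum_congr rfl fun p _ => ?_
          rw [← Finset.mul_sum, ← hwi p]
      _ = ∑ i, ∑ p, star (w p) * (A i *ᵥ (fun q => (M * (A i)ᴴ) q j)) p := Finset.sum_comm
      _ = ∑ i, ∑ q, star (((A i)ᴴ *ᵥ w) q) * (M * (A i)ᴴ) q j :=
          Finset.sum_congr rfl fun i _ => adjoint_sum (A i) w _
  have hnF : nsq F = ∑ i, nsq ((A i)ᴴ *ᵥ w) := by
    unfold nsq
    rw [Fintype.sum_prod_type]
  have hnG : nsq G = Q := by
    rw [hQ]
    unfold nsq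
    rw [Fintype.sum_prod_type]
  have hCS : nsq w ≤ Real.sqrt (∑ i, nsq ((A i)ᴴ *ᵥ w)) * Real.sqrt Q := by
    have h1 : nsq w = ‖((nsq w : ℝ) : ℂ)‖ := by
      rw [Complex.norm_real]
      exact (Real.norm_of_nonneg (nsq_nonneg w)).symm
    rw [h1, hkey, ← hnF, ← hnG]
    exact abs_sum_le_sqrt_mul_sqrt F G
  have hfin : (nsq w)^2 ≤ (((N : ℝ)) * Q) * nsq w := by
    have h2 : (nsq w)^2 ≤ (∑ i, nsq ((A i)ᴴ *ᵥ w)) * Q := by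
      calc (nsq w)^2 ≤ (Real.sqrt (∑ i, nsq ((A i)ᴴ *ᵥ w)) * Real.sqrt Q)^2 :=
            pow_le_pow_left₀ (nsq_nonneg w) hCS 2
        _ = (∑ i, nsq ((A i)ᴴ *ᵥ w)) * Q := by
            rw [mul_pow, Real.sq_sqrt (Finset.sum_nonneg fun _ _ => nsq_nonneg _),
              Real.sq_sqrt hQ0]
    refine h2.trans ?_
    have h3 := kraus_sum_nsq_le hA w
    calc (∑ i, nsq ((A i)ᴴ *ᵥ w)) * Q ≤ ((N : ℝ) * nsq w) * Q :=
          mul_le_mul_of_nonneg_right h3 hQ0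
      _ = (((N : ℝ)) * Q) * nsq w := by ring
  exact quad_trick (nsq_nonneg w) (mul_nonneg (Nat.cast_nonneg N) hQ0) hfin

lemma fro_eq_sum_col (B : Matrix ι κ ℂ) : fro B = ∑ j, nsq (fun p => B p j) := by
  unfold fro nsq
  rw [Finset.sum_comm]

lemma sum_fro_right (hA : ∑ i, (A i)ᴴ * A i = 1) (M : Matrix (Fin N) (Fin N) ℂ) :
    ∑ i, fro (M * (A i)ᴴ) = fro M := by
  have h1 : ∀ i : Fin k, ((fro (M * (A i)ᴴ) : ℝ) : ℂ) = (M * ((A i)ᴴ * A i) * Mᴴ).trace := by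
    intro i
    rw [← trace_mul_conjTranspose]
    congr 1
    rw [Matrix.conjTranspose_mul, Matrix.conjTranspose_conjTranspose]
    noncomm_ring
  have h2 : ((∑ i, fro (M * (A i)ᴴ) : ℝ) : ℂ) = ((fro M : ℝ) : ℂ) := by
    rw [Complex.ofReal_sum]
    rw [Finset.sum_congr rfl fun i _ => h1 i]
    rw [← Matrix.trace_sum]
    rw [show ∑ i, M * ((A i)ᴴ * A i) * Mᴴ = M * (∑ i, (A i)ᴴ * A i) * Mᴴ by
      rw [Finset.mul_sum, Finset.sum_mul]]
    rw [hA, mul_one, trace_mul_conjTranspose]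
  exact_mod_cast h2

lemma channel_fro_bound (hA : ∑ i, (A i)ᴴ * A i = 1) (M : Matrix (Fin N) (Fin N) ℂ) :
    fro (∑ i, A i * M * (A i)ᴴ) ≤ (N : ℝ) * fro M := by
  rw [fro_eq_sum_col]
  calc ∑ j, nsq (fun p => (∑ i, A i * M * (A i)ᴴ) p j)
      ≤ ∑ j, (N : ℝ) * ∑ i, nsq (fun q => (M * (A i)ᴴ) q j) :=
        Finset.sum_le_sum fun j _ => channel_col_bound hA M j
    _ = (N : ℝ) * ∑ i, fro (M * (A i)ᴴ) := by
        rw [← Finset.mul_sum]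
        congr 1
        rw [Finset.sum_comm]
        exact Finset.sum_congr rfl fun i _ => (fro_eq_sum_col _).symm
    _ = (N : ℝ) * fro M := by rw [sum_fro_right hA M]

end Kraus

lemma conjTranspose_bound {ι : Type*} [Fintype ι] [DecidableEq ι]
    (S : Matrix ι ι ℂ) (C : ℝ) (hC : 0 ≤ C)
    (h : ∀ m : ι → ℂ, nsq (S *ᵥ m) ≤ C * nsq m) (u : ι → ℂ) :
    nsq (Sᴴ *ᵥ u) ≤ C * nsq u := by
  set w := Sᴴ *ᵥ u with hw
  have h1 : ((nsq w : ℝ) : ℂ) = ∑ p, star (u p) * (S *ᵥ w) p := by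
    rw [adjoint_sum S u w, ← hw, sum_conj_mul_self]
  have h2 : nsq w ≤ Real.sqrt (nsq u) * Real.sqrt (nsq (S *ᵥ w)) := by
    have h3 : nsq w = ‖((nsq w : ℝ) : ℂ)‖ := by
      rw [Complex.norm_real]
      exact (Real.norm_of_nonneg (nsq_nonneg w)).symm
    rw [h3, h1]
    exact abs_sum_le_sqrt_mul_sqrt u (S *ᵥ w)
  have h4 : (nsq w)^2 ≤ (C * nsq u) * nsq w := by
    calc (nsq w)^2 ≤ (Real.sqrt (nsq u) * Real.sqrt (nsq (S *ᵥ w)))^2 :=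
          pow_le_pow_left₀ (nsq_nonneg w) h2 2
      _ = nsq u * nsq (S *ᵥ w) := by
          rw [mul_pow, Real.sq_sqrt (nsq_nonneg u), Real.sq_sqrt (nsq_nonneg _)]
      _ ≤ nsq u * (C * nsq w) := mul_le_mul_of_nonneg_left (h w) (nsq_nonneg u)
      _ = (C * nsq u) * nsq w := by ring
  exact quad_trick (nsq_nonneg w) (mul_nonneg hC (nsq_nonneg u)) h4

lemma shannonH_ge_renyi2 {ι : Type*} [Fintype ι] (v : ι → ℝ) (hv : ∀ i, 0 ≤ v i)
    (hs : 0 < ∑ j, v j) :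
    2 * Real.log (∑ j, v j) - Real.log (∑ j, (v j)^2)
      ≤ -∑ i, (v i / ∑ j, v j) * Real.log (v i / ∑ j, v j) := by
  set s := ∑ j, v j with hsdef
  set p : ι → ℝ := fun i => v i / s with hp
  have hp0 : ∀ i, 0 ≤ p i := fun i => div_nonneg (hv i) hs.le
  have hps : ∑ i, p i = 1 := by
    simp only [hp]
    rw [← Finset.sum_div]
    exact div_self hs.ne'
  set c := ∑ i, (p i)^2 with hc
  have hc0 : 0 < c := by
    obtain ⟨i, _, hi⟩ := Finset.exists_ne_zero_of_sum_ne_zero (s := Finset.univ) (f := p)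
      (by rw [hps]; norm_num)
    have : 0 < (p i)^2 := by positivity
    exact this.trans_le (Finset.single_le_sum (fun j _ => sq_nonneg (p j)) (Finset.mem_univ i))
  have key : ∀ i, p i * Real.log (p i) ≤ p i * (p i / c) - p i + p i * Real.log c := by
    intro i
    rcases (hp0 i).eq_or_lt with h0 | h0
    · simp [← h0]
    · have hlog : Real.log (p i) - Real.log c ≤ p i / c - 1 := by
        have h5 := Real.log_le_sub_one_of_pos (div_pos h0 hc0)
        rwa [Real.log_div h0.ne' hc0.ne'] at h5
      nlinarith [h0.le]
  have sum_key : ∑ i, p i * Real.log (p i) ≤ Real.log c := by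
    calc ∑ i, p i * Real.log (p i)
        ≤ ∑ i, (p i * (p i / c) - p i + p i * Real.log c) := Finset.sum_le_sum fun i _ => key i
      _ = (∑ i, (p i)^2) / c - (∑ i, p i) + (∑ i, p i) * Real.log c := by
          rw [Finset.sum_add_distrib, Finset.sum_sub_distrib, ← Finset.sum_mul,
            Finset.sum_div]
          congr 2
          refine Finset.sum_congr rfl fun i _ => ?_
          rw [pow_two]
          ring
      _ = Real.log c := by
          rw [← hc, hps, div_self hc0.ne', one_mul]
          ring
  have hlogc : Real.log c = Real.log (∑ j, (v j)^2) - 2 * Real.log s := by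
    have hcv : c = (∑ j, (v j)^2) / s^2 := by
      simp only [hc, hp, div_pow]
      rw [← Finset.sum_div]
    have hv2 : 0 < ∑ j, (v j)^2 := by
      have : c * s^2 = ∑ j, (v j)^2 := by
        rw [hcv, div_mul_cancel₀]
        positivity
      rw [← this]
      positivity
    rw [hcv, Real.log_div hv2.ne' (by positivity), Real.log_pow]
    push_cast
    ring
  have final : -Real.log c ≤ -∑ i, p i * Real.log (p i) := neg_le_neg sum_key
  rw [hlogc] at final
  calc 2 * Real.log s - Real.log (∑ j, (v j)^2)
      = -(Real.log (∑ j, (v j)^2) - 2 * Real.log s) := by ring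
    _ ≤ -∑ i, p i * Real.log (p i) := final

section Channel


variable {N k : ℕ} (Φ : Matrix (Fin N) (Fin N) ℂ →ₗ[ℂ] Matrix (Fin N) (Fin N) ℂ)
  (A : Fin k → Matrix (Fin N) (Fin N) ℂ)

lemma kraus_single_entry (i : Fin k) (a b p q : Fin N) :
    (A i * Matrix.single a b (1:ℂ) * (A i)ᴴ) p q = A i p a * star (A i q b) := by
  rw [Matrix.mul_apply]
  have : ∀ c, ((A i * Matrix.single a b (1:ℂ) : Matrix (Fin N) (Fin N) ℂ)) p c
      = if c = b then A i p a else 0 := by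
    intro c
    rw [Matrix.mul_apply]
    simp [Matrix.single, Matrix.of_apply, eq_comm, ite_and, Finset.sum_ite_eq]
  simp only [this, Matrix.conjTranspose_apply, ite_mul, zero_mul]
  simp [Finset.sum_ite_eq]

lemma choi_apply (hK : ∀ ρ, Φ ρ = ∑ i, A i * ρ * (A i)ᴴ) (p q : Fin N × Fin N) :
    choiMatrix Φ p q = ∑ i, A i p.1 p.2 * star (A i q.1 q.2) := by
  unfold choiMatrix
  rw [hK, Matrix.sum_apply]
  exact Finset.sum_congr rfl fun i _ => kraus_single_entry A i p.2 q.2 p.1 q.1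

lemma choi_trace (hK : ∀ ρ, Φ ρ = ∑ i, A i * ρ * (A i)ᴴ)
    (hA : ∑ i, (A i)ᴴ * A i = 1) : (choiMatrix Φ).trace = (N : ℂ) := by
  have hz : ∀ z : ℂ, z * star z = ((‖z‖^2 : ℝ) : ℂ) := fun z => by
    rw [mul_comm, conj_mul_self]
  have h1 : (choiMatrix Φ).trace = ∑ i, ((fro (A i) : ℝ) : ℂ) := by
    rw [Matrix.trace]
    calc ∑ p : Fin N × Fin N, (choiMatrix Φ).diag p
        = ∑ p : Fin N × Fin N, ∑ i, A i p.1 p.2 * star (A i p.1 p.2) :=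
          Finset.sum_congr rfl fun p _ => choi_apply Φ A hK p p
      _ = ∑ i, ∑ p : Fin N × Fin N, A i p.1 p.2 * star (A i p.1 p.2) := Finset.sum_comm
      _ = ∑ i, ((fro (A i) : ℝ) : ℂ) := by
          refine Finset.sum_congr rfl fun i _ => ?_
          unfold fro
          rw [Fintype.sum_prod_type, Complex.ofReal_sum]
          refine Finset.sum_congr rfl fun p1 _ => ?_
          rw [Complex.ofReal_sum]
          exact Finset.sum_congr rfl fun p2 _ => hz _
  rw [h1, ← Complex.ofReal_sum, sum_fro_eq hA]
  simp

lemma fro_super_eq_fro_choi : fro (superMatrix Φ) = fro (choiMatrix Φ) := by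
  unfold fro superMatrix choiMatrix
  simp only [Fintype.sum_prod_type]
  refine Finset.sum_congr rfl fun p1 _ => ?_
  rw [Finset.sum_comm]

lemma super_mulVec (m : (Fin N × Fin N) → ℂ) (p : Fin N × Fin N) :
    (superMatrix Φ *ᵥ m) p = (Φ (Matrix.of fun a b => m (a, b))) p.1 p.2 := by
  have hM : (Matrix.of fun a b => m (a, b))
      = ∑ a : Fin N, ∑ b : Fin N, m (a, b) • Matrix.single a b (1 : ℂ) := by
    conv_lhs => rw [Matrix.matrix_eq_sum_single (Matrix.of fun a b => m (a, b))]
    refine Finset.sum_congr rfl fun a _ => Finset.sum_congr rfl fun b _ => ?_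
    rw [Matrix.smul_single, smul_eq_mul, mul_one]
    rfl
  rw [hM]
  simp only [map_sum, _root_.map_smul, Matrix.sum_apply, Matrix.smul_apply, smul_eq_mul]
  rw [Matrix.mulVec, dotProduct, Fintype.sum_prod_type]
  unfold superMatrix
  refine Finset.sum_congr rfl fun a _ => Finset.sum_congr rfl fun b _ => ?_
  rw [mul_comm]


end Channel

end EntAux

theorem entropic_tradeoff_general {N : ℕ} (hN : 0 < N)
    (Φ : Matrix (Fin N) (Fin N) ℂ →ₗ[ℂ] Matrix (Fin N) (Fin N) ℂ) (hΦ : IsCPTP Φ) :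
    Real.log N ≤ shannonH (singularValues (choiMatrix Φ))
      + shannonH (singularValues (superMatrix Φ)) := by
  classical
  obtain ⟨k, A, hK, hA⟩ := hΦ
  have hNpos : (0:ℝ) < (N : ℝ) := by exact_mod_cast hN
  set D := choiMatrix Φ with hD
  set S := superMatrix Φ with hS
  set a := singularValues D with ha
  set b := singularValues S with hb
  have ha0 : ∀ i, 0 ≤ a i := fun i => Real.sqrt_nonneg _
  have hb0 : ∀ i, 0 ≤ b i := fun i => Real.sqrt_nonneg _
  -- trace of the Choi matrix
  have htrD : D.trace = (N : ℂ) := EntAux.choi_trace Φ A hK hA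
  have hsum_a : (N : ℝ) ≤ ∑ i, a i := by
    have h := EntAux.re_trace_le_sum_sv D
    rw [htrD] at h
    simpa using h
  have hTa : ∑ i, a i ^ 2 = EntAux.fro D := EntAux.sum_sv_sq D
  have hTb : ∑ i, b i ^ 2 = EntAux.fro D := by
    rw [hb, hS, EntAux.sum_sv_sq (superMatrix Φ), EntAux.fro_super_eq_fro_choi Φ, ← hD]
  set T := EntAux.fro D with hT
  -- operator bound for the superoperator
  have hSbound : ∀ m, EntAux.nsq (S *ᵥ m) ≤ (N:ℝ) * EntAux.nsq m := by
    intro m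
    have h1 : S *ᵥ m = fun p => (Φ (Matrix.of fun a' b' => m (a', b'))) p.1 p.2 :=
      funext (EntAux.super_mulVec Φ m)
    rw [h1]
    have h2 : EntAux.nsq (fun p : Fin N × Fin N =>
        (Φ (Matrix.of fun a' b' => m (a', b'))) p.1 p.2)
        = EntAux.fro (Φ (Matrix.of fun a' b' => m (a', b'))) := by
      unfold EntAux.nsq EntAux.fro
      rw [Fintype.sum_prod_type]
    have h3 : EntAux.nsq m = EntAux.fro (Matrix.of fun a' b' => m (a', b')) := by
      unfold EntAux.nsq EntAux.fro
      rw [Fintype.sum_prod_type]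
      rfl
    rw [h2, h3, hK]
    exact EntAux.channel_fro_bound hA _
  have hSHbound : ∀ u, EntAux.nsq (Sᴴ *ᵥ u) ≤ (N:ℝ) * EntAux.nsq u :=
    EntAux.conjTranspose_bound S (N:ℝ) hNpos.le hSbound
  have hb_sq : ∀ i, b i ^ 2 ≤ (N:ℝ) := fun i => EntAux.sv_sq_le_of_bound S (N:ℝ) hSHbound i
  -- positivity of T
  have hsuma0 : 0 < ∑ i, a i := lt_of_lt_of_le hNpos hsum_a
  have hT0 : 0 < T := by
    rcases (Finset.sum_nonneg (fun i (_ : i ∈ Finset.univ) => sq_nonneg (a i))).eq_or_lt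
      with h0 | h0
    · exfalso
      have hz : ∀ i ∈ Finset.univ, a i ^ 2 = 0 :=
        (Finset.sum_eq_zero_iff_of_nonneg (fun i _ => sq_nonneg (a i))).1 h0.symm
      have : ∑ i, a i = 0 := Finset.sum_eq_zero fun i hi => by
        have := hz i hi
        exact pow_eq_zero_iff (n := 2) (by norm_num) |>.1 this
      rw [this] at hsuma0
      exact lt_irrefl _ hsuma0
    · rwa [hTa] at h0
  have hsqrtN : (0:ℝ) < Real.sqrt N := Real.sqrt_pos.2 hNpos
  have hsum_b : T / Real.sqrt N ≤ ∑ i, b i := by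
    rw [div_le_iff₀ hsqrtN]
    calc T = ∑ i, b i ^ 2 := hTb.symm
      _ ≤ ∑ i, Real.sqrt N * b i := Finset.sum_le_sum fun i _ => by
          have hbi : b i ≤ Real.sqrt N := Real.le_sqrt_of_sq_le (hb_sq i)
          calc b i ^ 2 = b i * b i := sq (b i)
            _ ≤ Real.sqrt N * b i := mul_le_mul_of_nonneg_right hbi (hb0 i)
      _ = (∑ i, b i) * Real.sqrt N := by rw [← Finset.mul_sum, mul_comm]
  have hsumb0 : 0 < ∑ i, b i := lt_of_lt_of_le (div_pos hT0 hsqrtN) hsum_b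
  -- entropy lower bounds
  have hEa := EntAux.shannonH_ge_renyi2 a ha0 hsuma0
  have hEb := EntAux.shannonH_ge_renyi2 b hb0 hsumb0
  rw [hTa] at hEa
  rw [hTb] at hEb
  have hsha : shannonH a = -∑ i, (a i / ∑ j, a j) * Real.log (a i / ∑ j, a j) := rfl
  have hshb : shannonH b = -∑ i, (b i / ∑ j, b j) * Real.log (b i / ∑ j, b j) := rfl
  rw [← hsha] at hEa
  rw [← hshb] at hEb
  -- log comparisons
  have hlog_a : 2 * Real.log (N:ℝ) ≤ 2 * Real.log (∑ i, a i) := by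
    have := Real.log_le_log hNpos hsum_a
    linarith
  have hlog_b : Real.log T - Real.log (N:ℝ) ≤ 2 * Real.log (∑ i, b i) - Real.log T := by
    have h1 : Real.log (T / Real.sqrt N) ≤ Real.log (∑ i, b i) :=
      Real.log_le_log (div_pos hT0 hsqrtN) hsum_b
    have h2 : Real.log (T / Real.sqrt N) = Real.log T - Real.log N / 2 := by
      rw [Real.log_div hT0.ne' hsqrtN.ne', Real.log_sqrt hNpos.le]
    rw [h2] at h1
    linarith
  have hNlog : Real.log (N:ℝ) = 2 * Real.log (N:ℝ) - Real.log T + (Real.log T - Real.log (N:ℝ)) := by ring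
  calc Real.log (N:ℝ)
      = 2 * Real.log (N:ℝ) - Real.log T + (Real.log T - Real.log (N:ℝ)) := hNlog
    _ ≤ (2 * Real.log (∑ i, a i) - Real.log T) + (2 * Real.log (∑ i, b i) - Real.log T) := by
        have := hlog_a
        have := hlog_b
        linarith
    _ ≤ shannonH a + shannonH b := add_le_add hEa hEb

end
end

section
/- For any CPTP map Φ on an N-dimensional system and any q > 1, the Rényi entropies satisfy S_q^map(Φ) + S_q^rec(Φ) ≥ (F_min/2) ln N, where F_min = min(q/(q−1), 2); and if Φ is additionally unital, S_q^map(Φ) + S_q^rec(Φ) ≥ F_min · ln N. -/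
open Matrix
open scoped BigOperators Kronecker ComplexOrder

noncomputable section

namespace RTaux

variable {ι κ : Type*} [Fintype ι] [Fintype κ]

def nsq (v : ι → ℂ) : ℝ := ∑ i, Complex.normSq (v i)

def frobSq (M : Matrix ι κ ℂ) : ℝ := ∑ a, ∑ b, Complex.normSq (M a b)

lemma nsq_nonneg (v : ι → ℂ) : 0 ≤ nsq v :=
  Finset.sum_nonneg fun _ _ => Complex.normSq_nonneg _

lemma nsq_pos_of_ne_zero {v : ι → ℂ} (hv : v ≠ 0) : 0 < nsq v := by
  rcases (nsq_nonneg v).lt_or_eq with h | h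
  · exact h
  · exfalso; apply hv
    funext j
    have := (Finset.sum_eq_zero_iff_of_nonneg (fun i _ => Complex.normSq_nonneg (v i))).mp h.symm
    simpa [Complex.normSq_eq_zero] using this j (Finset.mem_univ j)

lemma star_dot_self (v : ι → ℂ) : star v ⬝ᵥ v = ((nsq v : ℝ) : ℂ) := by
  simp only [dotProduct, Pi.star_apply, nsq, Complex.ofReal_sum]
  exact Finset.sum_congr rfl fun i _ => by
    rw [Complex.normSq_eq_conj_mul_self]; rfl

lemma re_star_dot_self (v : ι → ℂ) : (star v ⬝ᵥ v).re = nsq v := by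
  rw [star_dot_self]; simp

lemma abs_star_dot_le (a b : ι → ℂ) :
    ‖star a ⬝ᵥ b‖ ≤ Real.sqrt (nsq a) * Real.sqrt (nsq b) := by
  calc ‖star a ⬝ᵥ b‖ ≤ ∑ i, ‖star (a i) * b i‖ := by
        simpa [dotProduct] using norm_sum_le Finset.univ (fun i => star (a i) * b i)
    _ = ∑ i, ‖a i‖ * ‖b i‖ := by
        simp [norm_mul]
    _ ≤ Real.sqrt (∑ i, ‖a i‖ ^ 2) * Real.sqrt (∑ i, ‖b i‖ ^ 2) :=
        Real.sum_mul_le_sqrt_mul_sqrt _ _ _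
    _ = Real.sqrt (nsq a) * Real.sqrt (nsq b) := by
        simp [nsq, Complex.sq_norm]

lemma frobSq_nonneg (M : Matrix ι κ ℂ) : 0 ≤ frobSq M :=
  Finset.sum_nonneg fun _ _ => Finset.sum_nonneg fun _ _ => Complex.normSq_nonneg _

lemma frobSq_eq_trace (M : Matrix ι κ ℂ) : ((frobSq M : ℝ) : ℂ) = (M * Mᴴ).trace := by
  simp only [frobSq, Matrix.trace, Matrix.diag, Matrix.mul_apply, Matrix.conjTranspose_apply]
  push_cast
  exact Finset.sum_congr rfl fun a _ => Finset.sum_congr rfl fun b _ => by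
    rw [Complex.normSq_eq_conj_mul_self, mul_comm]; rfl

lemma frobSq_eq_sum_nsq_col (M : Matrix ι κ ℂ) :
    frobSq M = ∑ b, nsq (fun a => M a b) := by
  rw [frobSq, Finset.sum_comm]; rfl

lemma frobSq_conjTranspose (M : Matrix ι κ ℂ) : frobSq Mᴴ = frobSq M := by
  rw [frobSq, Finset.sum_comm]
  simp [frobSq, Matrix.conjTranspose_apply, Complex.normSq_conj]

lemma dotProduct_sum' {κ' : Type*} (s : Finset κ') (v : ι → ℂ) (f : κ' → ι → ℂ) :
    v ⬝ᵥ (∑ j ∈ s, f j) = ∑ j ∈ s, v ⬝ᵥ f j := by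
  simp only [dotProduct, Finset.sum_apply, Finset.mul_sum]
  exact Finset.sum_comm

lemma dot_mul_conjT (Y : Matrix ι κ ℂ) (v : ι → ℂ) :
    star v ⬝ᵥ ((Y * Yᴴ) *ᵥ v) = ((nsq (Yᴴ *ᵥ v) : ℝ) : ℂ) := by
  rw [← Matrix.mulVec_mulVec, Matrix.dotProduct_mulVec, ← star_dot_self]
  congr 1
  rw [Matrix.star_mulVec, Matrix.conjTranspose_conjTranspose]

lemma nsq_mulVec_le (Y : Matrix ι κ ℂ) (w : κ → ℂ) :
    nsq (Y *ᵥ w) ≤ frobSq Y * nsq w := by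
  rw [nsq, frobSq, Finset.sum_mul]
  apply Finset.sum_le_sum
  intro a _
  calc Complex.normSq ((Y *ᵥ w) a) = ‖∑ b, Y a b * w b‖ ^ 2 := by
        rw [Complex.sq_norm]; rfl
    _ ≤ (∑ b, ‖Y a b‖ * ‖w b‖) ^ 2 := by
        apply pow_le_pow_left₀ (norm_nonneg _)
        calc ‖∑ b, Y a b * w b‖ ≤ ∑ b, ‖Y a b * w b‖ :=
              norm_sum_le _ _
          _ = ∑ b, ‖Y a b‖ * ‖w b‖ := by simp [norm_mul]
    _ ≤ (∑ b, ‖Y a b‖ ^ 2) * (∑ b, ‖w b‖ ^ 2) :=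
        Finset.sum_mul_sq_le_sq_mul_sq _ _ _
    _ = (∑ b, Complex.normSq (Y a b)) * nsq w := by simp [nsq, Complex.sq_norm]

section square

variable {n : Type*} [Fintype n] [DecidableEq n]

lemma trace_unitary_diag (U : Matrix.unitaryGroup n ℂ) (f : n → ℂ) :
    ((U : Matrix n n ℂ) * Matrix.diagonal f * (star U : Matrix n n ℂ)).trace = ∑ i, f i := by
  rw [Matrix.trace_mul_cycle, Unitary.coe_star_mul_self, Matrix.one_mul, Matrix.trace_diagonal]

lemma trace_eq_sum_eigen {A : Matrix n n ℂ} (hA : A.IsHermitian) :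
    A.trace = ((∑ i, hA.eigenvalues i : ℝ) : ℂ) := by
  conv_lhs => rw [hA.spectral_theorem]
  rw [Unitary.conjStarAlgAut_apply, trace_unitary_diag]
  push_cast
  rfl

lemma trace_sqrt {A : Matrix n n ℂ} (hA : A.PosSemidef) :
    (hA.1.cfc Real.sqrt).trace = ((∑ i, Real.sqrt (hA.1.eigenvalues i) : ℝ) : ℂ) := by
  have h : hA.1.cfc Real.sqrt = (hA.1.eigenvectorUnitary : Matrix n n ℂ) *
      Matrix.diagonal ((↑) ∘ Real.sqrt ∘ hA.1.eigenvalues) *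
      (star hA.1.eigenvectorUnitary : Matrix n n ℂ) := rfl
  rw [h, trace_unitary_diag]
  push_cast
  rfl

lemma sum_sv_sq (X : Matrix n n ℂ) :
    ∑ i, (singularValues X i) ^ 2 = (X * Xᴴ).trace.re := by
  have hP := Matrix.posSemidef_self_mul_conjTranspose X
  have h1 : ∀ i, (singularValues X i) ^ 2 = hP.1.eigenvalues i := fun i =>
    Real.sq_sqrt (hP.eigenvalues_nonneg i)
  simp_rw [h1]
  rw [trace_eq_sum_eigen hP.1]
  simp

lemma sum_sv_psd {D : Matrix n n ℂ} (hD : D.PosSemidef) :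
    ∑ i, singularValues D i = D.trace.re := by
  have hP := Matrix.posSemidef_self_mul_conjTranspose D
  have hsq : D ^ 2 = D * Dᴴ := by rw [pow_two, hD.1.eq]
  have hDsqrt : D = hP.1.cfc Real.sqrt := by
    open scoped MatrixOrder in
    rw [← hP.1.cfc_eq, ← cfcₙ_eq_cfc, ← CFC.sqrt_eq_real_sqrt _ (nonneg_iff_posSemidef.mpr hP), ← hsq,
      CFC.sqrt_sq D (nonneg_iff_posSemidef.mpr hD)]
  have h := trace_sqrt hP
  rw [← hDsqrt] at h
  rw [h]
  simp [singularValues]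

lemma eig_le_of_mulVec_bound (X : Matrix n n ℂ) {β : ℝ} (hβ : 0 ≤ β)
    (h : ∀ v, nsq (X *ᵥ v) ≤ β * nsq v) (i : n) :
    (Matrix.posSemidef_self_mul_conjTranspose X).1.eigenvalues i ≤ β := by
  set hP := Matrix.posSemidef_self_mul_conjTranspose X with hPdef
  set lam := hP.1.eigenvalues i with hlam
  set w : n → ℂ := ⇑(hP.1.eigenvectorBasis i) with hw
  have hweig : (X * Xᴴ) *ᵥ w = (lam : ℂ) • w := by
    have h2 := hP.1.mulVec_eigenvectorBasis i
    rwa [RCLike.real_smul_eq_coe_smul (K := ℂ)] at h2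
  have hwne : w ≠ 0 := by
    intro h0
    apply hP.1.eigenvectorBasis.orthonormal.ne_zero i
    apply PiLp.ext
    intro j
    exact congrFun h0 j
  set v : n → ℂ := Xᴴ *ᵥ w with hv
  by_cases hv0 : v = 0
  · have h0 : (lam : ℂ) • w = 0 := by
      rw [← hweig, ← Matrix.mulVec_mulVec, ← hv, hv0, Matrix.mulVec_zero]
    rcases smul_eq_zero.mp h0 with h1 | h1
    · have : lam = 0 := by exact_mod_cast h1
      linarith
    · exact absurd h1 hwne
  · have hvv : (Xᴴ * X) *ᵥ v = (lam : ℂ) • v := by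
      rw [hv, Matrix.mulVec_mulVec, Matrix.mul_assoc, ← Matrix.mulVec_mulVec, hweig,
        Matrix.mulVec_smul]
    have hkey : lam * nsq v = nsq (X *ᵥ v) := by
      have h1 : star v ⬝ᵥ ((Xᴴ * X) *ᵥ v) = ((nsq (X *ᵥ v) : ℝ) : ℂ) := by
        have h2 := dot_mul_conjT Xᴴ v
        rwa [Matrix.conjTranspose_conjTranspose] at h2
      have h2 : star v ⬝ᵥ ((Xᴴ * X) *ᵥ v) = ((lam * nsq v : ℝ) : ℂ) := by
        rw [hvv, dotProduct_smul, star_dot_self, smul_eq_mul]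
        push_cast
        ring
      have h3 := h2.symm.trans h1
      exact_mod_cast h3
    have hnv : 0 < nsq v := nsq_pos_of_ne_zero hv0
    have h3 : lam * nsq v ≤ β * nsq v := hkey.trans_le (h v)
    exact le_of_mul_le_mul_right h3 hnv

lemma sv_sq_le_of_mulVec_bound (X : Matrix n n ℂ) {β : ℝ} (hβ : 0 ≤ β)
    (h : ∀ v, nsq (X *ᵥ v) ≤ β * nsq v) (i : n) :
    (singularValues X i) ^ 2 ≤ β := by
  have h2 := eig_le_of_mulVec_bound X hβ h i
  calc (singularValues X i) ^ 2
      = (Matrix.posSemidef_self_mul_conjTranspose X).1.eigenvalues i :=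
        Real.sq_sqrt ((Matrix.posSemidef_self_mul_conjTranspose X).eigenvalues_nonneg i)
    _ ≤ β := h2

omit [DecidableEq n] in
lemma nsq_sum_mulVec_le {k : ℕ} (A : Fin k → Matrix n n ℂ) {β : ℝ} (hβ0 : 0 ≤ β)
    (hAA : ∀ w : n → ℂ, ∑ i, nsq ((A i)ᴴ *ᵥ w) ≤ β * nsq w)
    (u : Fin k → n → ℂ) :
    nsq (∑ i, (A i) *ᵥ u i) ≤ β * ∑ i, nsq (u i) := by
  set w : n → ℂ := ∑ i, (A i) *ᵥ u i with hw
  set x := nsq w with hx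
  set U := ∑ i, nsq (u i) with hU
  have hU0 : 0 ≤ U := Finset.sum_nonneg fun i _ => nsq_nonneg _
  have hx0 : 0 ≤ x := nsq_nonneg _
  have hβx : 0 ≤ β * x := mul_nonneg hβ0 hx0
  have step : x ≤ Real.sqrt (β * x) * Real.sqrt U := by
    have h1 : x = (star w ⬝ᵥ w).re := (re_star_dot_self w).symm
    have h2 : star w ⬝ᵥ w = ∑ i, star ((A i)ᴴ *ᵥ w) ⬝ᵥ u i := by
      have e1 : ∀ i, star ((A i)ᴴ *ᵥ w) ⬝ᵥ u i = star w ⬝ᵥ ((A i) *ᵥ u i) := fun i => by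
        rw [Matrix.star_mulVec, Matrix.conjTranspose_conjTranspose, ← Matrix.dotProduct_mulVec]
      simp_rw [e1]
      conv_lhs => rw [hw]
      simp only [dotProduct, Finset.sum_apply, Finset.mul_sum]
      exact Finset.sum_comm
    calc x = (∑ i, star ((A i)ᴴ *ᵥ w) ⬝ᵥ u i).re := by rw [h1, h2]
      _ ≤ ‖∑ i, star ((A i)ᴴ *ᵥ w) ⬝ᵥ u i‖ := Complex.re_le_norm _
      _ ≤ ∑ i, ‖star ((A i)ᴴ *ᵥ w) ⬝ᵥ u i‖ := norm_sum_le _ _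
      _ ≤ ∑ i, Real.sqrt (nsq ((A i)ᴴ *ᵥ w)) * Real.sqrt (nsq (u i)) :=
          Finset.sum_le_sum fun i _ => abs_star_dot_le _ _
      _ ≤ Real.sqrt (∑ i, nsq ((A i)ᴴ *ᵥ w)) * Real.sqrt (∑ i, nsq (u i)) :=
          Real.sum_sqrt_mul_sqrt_le _ (fun i => nsq_nonneg _) (fun i => nsq_nonneg _)
      _ ≤ Real.sqrt (β * x) * Real.sqrt U := by
          apply mul_le_mul_of_nonneg_right _ (Real.sqrt_nonneg _)
          exact Real.sqrt_le_sqrt (hAA w)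
  by_cases h0 : x = 0
  · rw [h0]; positivity
  · have hxpos : 0 < x := lt_of_le_of_ne hx0 (Ne.symm h0)
    have hsq : (Real.sqrt (β * x) * Real.sqrt U) * (Real.sqrt (β * x) * Real.sqrt U)
        = (β * U) * x := by
      rw [mul_mul_mul_comm, Real.mul_self_sqrt hβx, Real.mul_self_sqrt hU0]; ring
    have h2 : x * x ≤ (β * U) * x := by
      calc x * x ≤ (Real.sqrt (β * x) * Real.sqrt U) * (Real.sqrt (β * x) * Real.sqrt U) :=
            mul_self_le_mul_self hx0 step
        _ = (β * U) * x := hsq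
    exact le_of_mul_le_mul_right h2 hxpos

omit [DecidableEq n] in
lemma sum_mulVec' {k : ℕ} (M : Fin k → Matrix n n ℂ) (w : n → ℂ) :
    (∑ i, M i) *ᵥ w = ∑ i, (M i *ᵥ w) := by
  funext a
  simp only [Matrix.mulVec, dotProduct, Finset.sum_apply, Matrix.sum_apply, Finset.sum_mul]
  exact Finset.sum_comm

omit [DecidableEq n] in
lemma sum_nsq_eq_qf {k : ℕ} (A : Fin k → Matrix n n ℂ) (w : n → ℂ) :
    ((∑ i, nsq ((A i)ᴴ *ᵥ w) : ℝ) : ℂ) = star w ⬝ᵥ ((∑ i, A i * (A i)ᴴ) *ᵥ w) := by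
  rw [sum_mulVec', dotProduct_sum']
  push_cast
  exact Finset.sum_congr rfl fun i _ => (dot_mul_conjT (A i) w).symm

lemma mul_stdBasis_mul_conjT (A B : Matrix n n ℂ) (a b x y : n) :
    (A * Matrix.single a b 1 * Bᴴ : Matrix n n ℂ) x y = A x a * star (B y b) := by
  simp [Matrix.mul_apply, Matrix.single, Matrix.conjTranspose_apply, ite_and,
    Finset.mul_sum, Finset.sum_mul, mul_comm]

lemma sum_kraus_trace_eq {k : ℕ} (A : Fin k → Matrix n n ℂ)
    (hTP : ∑ i, (A i)ᴴ * A i = 1) :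
    ∑ i, frobSq (A i) = (Fintype.card n : ℝ) := by
  have h : ((∑ i, frobSq (A i) : ℝ) : ℂ) = ((Fintype.card n : ℝ) : ℂ) := by
    push_cast
    calc ∑ i, ((frobSq (A i) : ℝ) : ℂ) = ∑ i, ((frobSq (A i)ᴴ : ℝ) : ℂ) := by
          simp_rw [frobSq_conjTranspose]
      _ = ∑ i, ((A i)ᴴ * A i).trace := by
          refine Finset.sum_congr rfl fun i _ => ?_
          rw [frobSq_eq_trace, Matrix.conjTranspose_conjTranspose]
      _ = ((1 : Matrix n n ℂ)).trace := by rw [← Matrix.trace_sum, hTP]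
      _ = ((Fintype.card n : ℝ) : ℂ) := by rw [Matrix.trace_one]; push_cast; rfl
  exact_mod_cast h

lemma sum_frob_mul_conjT {k : ℕ} (A : Fin k → Matrix n n ℂ)
    (hTP : ∑ i, (A i)ᴴ * A i = 1) (M : Matrix n n ℂ) :
    ∑ i, frobSq (M * (A i)ᴴ) = frobSq M := by
  have h : ((∑ i, frobSq (M * (A i)ᴴ) : ℝ) : ℂ) = ((frobSq M : ℝ) : ℂ) := by
    push_cast
    calc ∑ i, ((frobSq (M * (A i)ᴴ) : ℝ) : ℂ)
        = ∑ i, ((M * (A i)ᴴ) * ((A i) * Mᴴ)).trace := by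
          refine Finset.sum_congr rfl fun i _ => ?_
          rw [frobSq_eq_trace, Matrix.conjTranspose_mul, Matrix.conjTranspose_conjTranspose]
      _ = ∑ i, (M * ((A i)ᴴ * A i) * Mᴴ).trace := by
          refine Finset.sum_congr rfl fun i _ => ?_
          congr 1
          simp only [Matrix.mul_assoc]
      _ = (M * Mᴴ).trace := by
          rw [← Matrix.trace_sum]
          congr 1
          rw [← Finset.sum_mul, ← Finset.mul_sum, hTP, Matrix.mul_one]
      _ = ((frobSq M : ℝ) : ℂ) := (frobSq_eq_trace M).symm
  exact_mod_cast h

lemma frob_bound_of_kraus {k : ℕ} (A : Fin k → Matrix n n ℂ) {β : ℝ} (hβ0 : 0 ≤ β)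
    (hAA : ∀ w : n → ℂ, ∑ i, nsq ((A i)ᴴ *ᵥ w) ≤ β * nsq w)
    (hTP : ∑ i, (A i)ᴴ * A i = 1) (M : Matrix n n ℂ) :
    frobSq (∑ i, A i * M * (A i)ᴴ) ≤ β * frobSq M := by
  have hcol : ∀ b : n, (fun a => (∑ i, A i * M * (A i)ᴴ) a b)
      = ∑ i, (A i) *ᵥ (fun s => (M * (A i)ᴴ) s b) := by
    intro b
    funext a
    simp only [Matrix.sum_apply, Finset.sum_apply]
    refine Finset.sum_congr rfl fun i _ => ?_
    rw [Matrix.mul_assoc, Matrix.mul_apply]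
    rfl
  calc frobSq (∑ i, A i * M * (A i)ᴴ)
      = ∑ b, nsq (fun a => (∑ i, A i * M * (A i)ᴴ) a b) := frobSq_eq_sum_nsq_col _
    _ ≤ ∑ b, β * ∑ i, nsq (fun s => (M * (A i)ᴴ) s b) := by
        refine Finset.sum_le_sum fun b _ => ?_
        rw [hcol b]
        exact nsq_sum_mulVec_le A hβ0 hAA _
    _ = β * ∑ i, frobSq (M * (A i)ᴴ) := by
        rw [← Finset.mul_sum]
        congr 1
        rw [Finset.sum_comm]
        exact Finset.sum_congr rfl fun i _ => (frobSq_eq_sum_nsq_col _).symm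
    _ = β * frobSq M := by rw [sum_frob_mul_conjT A hTP M]

lemma kraus_qf_bound {k : ℕ} (A : Fin k → Matrix n n ℂ)
    (hTP : ∑ i, (A i)ᴴ * A i = 1) (w : n → ℂ) :
    ∑ i, nsq ((A i)ᴴ *ᵥ w) ≤ (Fintype.card n : ℝ) * nsq w := by
  calc ∑ i, nsq ((A i)ᴴ *ᵥ w) ≤ ∑ i, frobSq (A i)ᴴ * nsq w :=
        Finset.sum_le_sum fun i _ => nsq_mulVec_le _ _
    _ = (∑ i, frobSq (A i)ᴴ) * nsq w := (Finset.sum_mul _ _ _).symm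
    _ = (Fintype.card n : ℝ) * nsq w := by
        congr 1
        calc ∑ i, frobSq (A i)ᴴ = ∑ i, frobSq (A i) := by simp_rw [frobSq_conjTranspose]
          _ = (Fintype.card n : ℝ) := sum_kraus_trace_eq A hTP

lemma kraus_qf_bound_unital {k : ℕ} (A : Fin k → Matrix n n ℂ)
    (hone : ∑ i, A i * (A i)ᴴ = 1) (w : n → ℂ) :
    ∑ i, nsq ((A i)ᴴ *ᵥ w) ≤ 1 * nsq w := by
  have h := sum_nsq_eq_qf A w
  rw [hone, Matrix.one_mulVec, star_dot_self] at h
  have h2 : ∑ i, nsq ((A i)ᴴ *ᵥ w) = nsq w := by exact_mod_cast h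
  rw [h2, one_mul]

end square

section choi

variable {N : ℕ}

lemma choi_entry (Φ : Matrix (Fin N) (Fin N) ℂ →ₗ[ℂ] Matrix (Fin N) (Fin N) ℂ)
    {k : ℕ} (A : Fin k → Matrix (Fin N) (Fin N) ℂ)
    (hK : ∀ ρ, Φ ρ = ∑ i, A i * ρ * (A i)ᴴ) (p q : Fin N × Fin N) :
    choiMatrix Φ p q = ∑ i, A i p.1 p.2 * star (A i q.1 q.2) := by
  show Φ (Matrix.single p.2 q.2 1) p.1 q.1 = _
  rw [hK, Matrix.sum_apply]
  show ∑ i, (A i * Matrix.single p.2 q.2 1 * (A i)ᴴ : Matrix (Fin N) (Fin N) ℂ) p.1 q.1 = _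
  exact Finset.sum_congr rfl fun i _ => mul_stdBasis_mul_conjT _ _ _ _ _ _

lemma choi_psd (Φ : Matrix (Fin N) (Fin N) ℂ →ₗ[ℂ] Matrix (Fin N) (Fin N) ℂ)
    {k : ℕ} (A : Fin k → Matrix (Fin N) (Fin N) ℂ)
    (hK : ∀ ρ, Φ ρ = ∑ i, A i * ρ * (A i)ᴴ) : (choiMatrix Φ).PosSemidef := by
  have hC : choiMatrix Φ =
      (Matrix.of fun (i : Fin k) (p : Fin N × Fin N) => star (A i p.1 p.2))ᴴ *
      (Matrix.of fun (i : Fin k) (p : Fin N × Fin N) => star (A i p.1 p.2)) := by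
    ext p q
    rw [choi_entry Φ A hK p q, Matrix.mul_apply]
    simp [Matrix.conjTranspose_apply]
  rw [hC]
  exact Matrix.posSemidef_conjTranspose_mul_self _

lemma choi_trace (Φ : Matrix (Fin N) (Fin N) ℂ →ₗ[ℂ] Matrix (Fin N) (Fin N) ℂ)
    {k : ℕ} (A : Fin k → Matrix (Fin N) (Fin N) ℂ)
    (hK : ∀ ρ, Φ ρ = ∑ i, A i * ρ * (A i)ᴴ) (hTP : ∑ i, (A i)ᴴ * A i = 1) :
    (choiMatrix Φ).trace = ((N : ℝ) : ℂ) := by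
  have h1 : (choiMatrix Φ).trace = ∑ i, ((frobSq (A i) : ℝ) : ℂ) := by
    rw [Matrix.trace]
    simp only [Matrix.diag]
    calc ∑ p : Fin N × Fin N, choiMatrix Φ p p
        = ∑ p : Fin N × Fin N, ∑ i, A i p.1 p.2 * star (A i p.1 p.2) :=
          Finset.sum_congr rfl fun p _ => choi_entry Φ A hK p p
      _ = ∑ i, ∑ p : Fin N × Fin N, A i p.1 p.2 * star (A i p.1 p.2) := Finset.sum_comm
      _ = ∑ i, ((frobSq (A i) : ℝ) : ℂ) := by
          refine Finset.sum_congr rfl fun i _ => ?_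
          rw [frobSq]
          push_cast
          rw [Fintype.sum_prod_type]
          exact Finset.sum_congr rfl fun a _ => Finset.sum_congr rfl fun b _ => by
            rw [Complex.normSq_eq_conj_mul_self, mul_comm]; rfl
  rw [h1, ← Complex.ofReal_sum, sum_kraus_trace_eq A hTP]
  simp

lemma frobSq_super_eq_choi (Φ : Matrix (Fin N) (Fin N) ℂ →ₗ[ℂ] Matrix (Fin N) (Fin N) ℂ) :
    frobSq (superMatrix Φ) = frobSq (choiMatrix Φ) := by
  simp only [frobSq, superMatrix, choiMatrix, Fintype.sum_prod_type]
  refine Finset.sum_congr rfl fun a _ => ?_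
  exact Finset.sum_comm

lemma matrix_eq_sum_std (v : Fin N × Fin N → ℂ) :
    (Matrix.of fun a b => v (a, b)) =
      ∑ q : Fin N × Fin N, v q • Matrix.single q.1 q.2 1 := by
  ext a b
  rw [Matrix.sum_apply]
  simp only [Matrix.smul_apply, Matrix.single, Matrix.of_apply, smul_eq_mul]
  rw [Fintype.sum_prod_type]
  simp [ite_and]

lemma super_mulVec (Φ : Matrix (Fin N) (Fin N) ℂ →ₗ[ℂ] Matrix (Fin N) (Fin N) ℂ)
    (v : Fin N × Fin N → ℂ) :
    superMatrix Φ *ᵥ v = fun p => Φ (Matrix.of fun a b => v (a, b)) p.1 p.2 := by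
  funext p
  show ∑ q, superMatrix Φ p q * v q = _
  rw [matrix_eq_sum_std v, map_sum]
  rw [Matrix.sum_apply]
  refine Finset.sum_congr rfl fun q _ => ?_
  rw [_root_.map_smul]
  simp only [Matrix.smul_apply, smul_eq_mul, superMatrix]
  ring

lemma nsq_super_mulVec (Φ : Matrix (Fin N) (Fin N) ℂ →ₗ[ℂ] Matrix (Fin N) (Fin N) ℂ)
    (v : Fin N × Fin N → ℂ) :
    nsq (superMatrix Φ *ᵥ v) = frobSq (Φ (Matrix.of fun a b => v (a, b))) := by
  rw [super_mulVec, nsq, frobSq, Fintype.sum_prod_type]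

lemma frobSq_of_vec (v : Fin N × Fin N → ℂ) :
    frobSq (Matrix.of fun a b => v (a, b)) = nsq v := by
  rw [frobSq, nsq, Fintype.sum_prod_type]
  simp only [Matrix.of_apply]

end choi

lemma renyi_lower {ι : Type*} [Fintype ι] {q : ℝ} (hq : 1 < q) (v : ι → ℝ)
    (hv : ∀ i, 0 ≤ v i) (hT : 0 < ∑ i, v i) :
    min (q / (q - 1)) 2 / 2 * Real.log ((∑ i, v i) ^ 2 / ∑ i, (v i) ^ 2) ≤ renyiH q v := by
  have hq1 : (0:ℝ) < q - 1 := by linarith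
  have hqne : q - 1 ≠ 0 := ne_of_gt hq1
  set T : ℝ := ∑ i, v i with hTdef
  set p : ι → ℝ := fun i => v i / T with hpdef
  have hp0 : ∀ i, 0 ≤ p i := fun i => div_nonneg (hv i) hT.le
  have hp1 : ∑ i, p i = 1 := by
    rw [hpdef, ← Finset.sum_div, div_self (ne_of_gt hT)]
  set s2 : ℝ := ∑ i, p i ^ 2 with hs2def
  have hs2v : s2 = (∑ i, (v i) ^ 2) / T ^ 2 := by
    rw [hs2def, Finset.sum_div]
    exact Finset.sum_congr rfl fun i _ => by rw [hpdef]; exact div_pow _ _ _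
  obtain ⟨i0, hi0⟩ : ∃ i, 0 < p i := by
    by_contra h
    push_neg at h
    have : (1:ℝ) ≤ 0 := hp1 ▸ Finset.sum_nonpos (fun i _ => h i)
    linarith
  have hs2pos : 0 < s2 := lt_of_lt_of_le (pow_pos hi0 2)
    (Finset.single_le_sum (fun i _ => sq_nonneg (p i)) (Finset.mem_univ i0))
  set e : ℝ := min (q / 2) (q - 1) with hedef
  have he : 0 < e := lt_min (by linarith) hq1
  have hspos : 0 < ∑ i, p i ^ q := by
    refine lt_of_lt_of_le (Real.rpow_pos_of_pos hi0 q) ?_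
    exact Finset.single_le_sum (fun i _ => Real.rpow_nonneg (hp0 i) q) (Finset.mem_univ i0)
  have key : ∑ i, p i ^ q ≤ s2 ^ e := by
    rcases le_total 2 q with hq2 | hq2
    · have hee : e = q / 2 := min_eq_left (by linarith)
      have hpt : ∀ i, p i ≤ Real.sqrt s2 := by
        intro i
        have h1 : p i ^ 2 ≤ s2 :=
          Finset.single_le_sum (fun i _ => sq_nonneg (p i)) (Finset.mem_univ i)
        calc p i = Real.sqrt (p i ^ 2) := (Real.sqrt_sq (hp0 i)).symm
          _ ≤ Real.sqrt s2 := Real.sqrt_le_sqrt h1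
      have hstep : ∀ i, p i ^ q ≤ p i ^ 2 * Real.sqrt s2 ^ (q - 2 : ℝ) := by
        intro i
        by_cases hpi : p i = 0
        · rw [hpi, Real.zero_rpow (by linarith : q ≠ 0)]
          positivity
        · have hpip : 0 < p i := lt_of_le_of_ne (hp0 i) (Ne.symm hpi)
          have h2 : p i ^ q = p i ^ (2:ℝ) * p i ^ (q - 2 : ℝ) := by
            rw [← Real.rpow_add hpip]; norm_num
          rw [h2, Real.rpow_two]
          exact mul_le_mul_of_nonneg_left
            (Real.rpow_le_rpow (hp0 i) (hpt i) (by linarith)) (sq_nonneg _)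
      calc ∑ i, p i ^ q ≤ ∑ i, p i ^ 2 * Real.sqrt s2 ^ (q - 2 : ℝ) :=
            Finset.sum_le_sum fun i _ => hstep i
        _ = s2 * Real.sqrt s2 ^ (q - 2 : ℝ) := by rw [← Finset.sum_mul]
        _ = s2 ^ e := by
            rw [hee, Real.sqrt_eq_rpow, ← Real.rpow_mul hs2pos.le]
            nth_rewrite 1 [← Real.rpow_one s2]
            rw [← Real.rpow_add hs2pos]
            congr 1
            ring
    · have hee : e = q - 1 := min_eq_right (by linarith)
      set r : ℝ := 1 / (q - 1) with hrdef
      have hr : 1 ≤ r := by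
        rw [hrdef, le_div_iff₀ hq1]
        linarith
      have hmean := Real.rpow_arith_mean_le_arith_mean_rpow Finset.univ p
        (fun i => p i ^ (q - 1 : ℝ)) (fun i _ => hp0 i) hp1
        (fun i _ => Real.rpow_nonneg (hp0 i) _) hr
      have hL : ∑ i, p i * p i ^ (q - 1 : ℝ) = ∑ i, p i ^ q := by
        refine Finset.sum_congr rfl fun i _ => ?_
        by_cases hpi : p i = 0
        · rw [hpi, Real.zero_rpow (by linarith : q ≠ 0), zero_mul]
        · have hpip : 0 < p i := lt_of_le_of_ne (hp0 i) (Ne.symm hpi)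
          calc p i * p i ^ (q - 1 : ℝ) = p i ^ (1:ℝ) * p i ^ (q - 1 : ℝ) := by
                rw [Real.rpow_one]
            _ = p i ^ q := by rw [← Real.rpow_add hpip]; norm_num
      have hR : ∑ i, p i * (p i ^ (q - 1 : ℝ)) ^ r = s2 := by
        refine Finset.sum_congr rfl fun i _ => ?_
        have hpr : (p i ^ (q - 1 : ℝ)) ^ r = p i := by
          rw [← Real.rpow_mul (hp0 i), hrdef, mul_one_div, div_self hqne, Real.rpow_one]
        rw [hpr, ← sq]
      rw [hL, hR] at hmean
      have hfin : ((∑ i, p i ^ q) ^ r) ^ (q - 1 : ℝ) = ∑ i, p i ^ q := by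
        rw [← Real.rpow_mul hspos.le, hrdef, one_div, inv_mul_cancel₀ hqne, Real.rpow_one]
      calc ∑ i, p i ^ q = ((∑ i, p i ^ q) ^ r) ^ (q - 1 : ℝ) := hfin.symm
        _ ≤ s2 ^ (q - 1 : ℝ) :=
            Real.rpow_le_rpow (Real.rpow_nonneg hspos.le r) hmean hq1.le
        _ = s2 ^ e := by rw [hee]
  have hlog : Real.log (∑ i, p i ^ q) ≤ e * Real.log s2 := by
    calc Real.log (∑ i, p i ^ q) ≤ Real.log (s2 ^ e) := Real.log_le_log hspos key
      _ = e * Real.log s2 := Real.log_rpow hs2pos e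
  have hmono : (1 / (1 - q)) * (e * Real.log s2) ≤ renyiH q v := by
    rw [renyiH]
    have hneg : (1 / (1 - q)) ≤ 0 := by
      apply div_nonpos_of_nonneg_of_nonpos <;> linarith
    exact mul_le_mul_of_nonpos_left hlog hneg
  refine le_trans (le_of_eq ?_) hmono
  have hs2inv : T ^ 2 / ∑ i, (v i) ^ 2 = s2⁻¹ := by
    rw [hs2v, inv_div]
  rw [hs2inv, Real.log_inv]
  have hF : min (q / (q - 1)) 2 / 2 = e / (q - 1) := by
    rcases le_total q 2 with h2 | h2
    · rw [hedef, min_eq_right (by rw [le_div_iff₀ hq1]; linarith : (2:ℝ) ≤ q / (q - 1)),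
        min_eq_right (by linarith : q - 1 ≤ q / 2), div_self hqne]
      norm_num
    · rw [hedef, min_eq_left (by rw [div_le_iff₀ hq1]; linarith : q / (q - 1) ≤ 2),
        min_eq_left (by linarith : q / 2 ≤ q - 1), div_div, div_div, mul_comm]
  rw [hF]
  have h1q : (1:ℝ) - q ≠ 0 := by linarith
  field_simp
  ring

end RTaux


theorem renyi_tradeoff {N : ℕ} (hN : 0 < N)
    (Φ : Matrix (Fin N) (Fin N) ℂ →ₗ[ℂ] Matrix (Fin N) (Fin N) ℂ) (hΦ : IsCPTP Φ) (q : ℝ) (hq : 1 < q) :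
    (min (q / (q - 1)) 2 / 2) * Real.log N
        ≤ renyiH q (singularValues (choiMatrix Φ))
          + renyiH q (singularValues (superMatrix Φ)) ∧
    (Φ 1 = 1 →
      min (q / (q - 1)) 2 * Real.log N
        ≤ renyiH q (singularValues (choiMatrix Φ))
          + renyiH q (singularValues (superMatrix Φ))) := by
  obtain ⟨k, A, hK, hTP⟩ := hΦ
  have hNpos : (0:ℝ) < N := by exact_mod_cast hN
  set D := choiMatrix Φ with hDdef
  set X := superMatrix Φ with hXdef
  have hDpsd : D.PosSemidef := RTaux.choi_psd Φ A hK
  have hsvD_nonneg : ∀ i, 0 ≤ singularValues D i := fun i => Real.sqrt_nonneg _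
  have hsvX_nonneg : ∀ i, 0 ≤ singularValues X i := fun i => Real.sqrt_nonneg _
  have hsvD : ∑ i, singularValues D i = (N : ℝ) := by
    rw [RTaux.sum_sv_psd hDpsd, hDdef, RTaux.choi_trace Φ A hK hTP, Complex.ofReal_re]
  set c := ∑ i, (singularValues D i) ^ 2 with hcdef
  have hXD : ∑ i, (singularValues X i) ^ 2 = c := by
    rw [hcdef, RTaux.sum_sv_sq, RTaux.sum_sv_sq, ← RTaux.frobSq_eq_trace, ← RTaux.frobSq_eq_trace]
    simp only [Complex.ofReal_re]
    rw [hXdef, hDdef]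
    exact RTaux.frobSq_super_eq_choi Φ
  have hc_pos : 0 < c := by
    rcases (Finset.sum_nonneg fun i _ => sq_nonneg (singularValues D i) : (0:ℝ) ≤ c).lt_or_eq
      with h | h
    · exact h
    · exfalso
      have hz : ∀ i ∈ Finset.univ, (singularValues D i) ^ 2 = 0 :=
        (Finset.sum_eq_zero_iff_of_nonneg fun i _ => sq_nonneg _).mp h.symm
      have hz' : ∀ i, singularValues D i = 0 := fun i =>
        pow_eq_zero_iff two_ne_zero |>.mp (hz i (Finset.mem_univ i))
      rw [Finset.sum_congr rfl fun i _ => hz' i, Finset.sum_const, smul_zero] at hsvD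
      exact absurd hsvD.symm (by positivity)
  have main : ∀ β : ℝ, 0 < β → (∀ i, (singularValues X i) ^ 2 ≤ β) →
      min (q / (q - 1)) 2 / 2 * Real.log ((N:ℝ) ^ 2 / β)
        ≤ renyiH q (singularValues D) + renyiH q (singularValues X) := by
    intro β hβ hb
    have hF2pos : 0 < min (q / (q - 1)) 2 / 2 := by
      apply div_pos _ two_pos
      exact lt_min (div_pos (by linarith) (by linarith)) two_pos
    set TX := ∑ i, singularValues X i with hTXdef
    have hsb : ∀ i, singularValues X i ≤ Real.sqrt β := fun i => by
      calc singularValues X i = Real.sqrt ((singularValues X i) ^ 2) :=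
            (Real.sqrt_sq (hsvX_nonneg i)).symm
        _ ≤ Real.sqrt β := Real.sqrt_le_sqrt (hb i)
    have hcTX : c ≤ Real.sqrt β * TX := by
      calc c = ∑ i, (singularValues X i) ^ 2 := hXD.symm
        _ ≤ ∑ i, Real.sqrt β * singularValues X i := by
            refine Finset.sum_le_sum fun i _ => ?_
            rw [sq]
            exact mul_le_mul_of_nonneg_right (hsb i) (hsvX_nonneg i)
        _ = Real.sqrt β * TX := by rw [hTXdef, Finset.mul_sum]
    have hTXpos : 0 < TX := by
      rcases (Finset.sum_nonneg fun i _ => hsvX_nonneg i : (0:ℝ) ≤ TX).lt_or_eq with h | h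
      · exact h
      · exfalso; rw [hTXdef, ← h, mul_zero] at hcTX; linarith
    have hbound1 : min (q / (q - 1)) 2 / 2 * Real.log ((N:ℝ) ^ 2 / c)
        ≤ renyiH q (singularValues D) := by
      have h := RTaux.renyi_lower hq (singularValues D) hsvD_nonneg (by rw [hsvD]; exact hNpos)
      rwa [hsvD, ← hcdef] at h
    have hbound2 : min (q / (q - 1)) 2 / 2 * Real.log (c / β)
        ≤ renyiH q (singularValues X) := by
      have h := RTaux.renyi_lower hq (singularValues X) hsvX_nonneg
        (by rw [← hTXdef]; exact hTXpos)
      rw [← hTXdef, hXD] at h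
      refine le_trans ?_ h
      apply mul_le_mul_of_nonneg_left _ hF2pos.le
      apply Real.log_le_log (by positivity)
      rw [div_le_div_iff₀ hβ hc_pos]
      nlinarith [Real.sq_sqrt hβ.le, Real.sqrt_nonneg β, hcTX, hc_pos.le, hTXpos.le]
    calc min (q / (q - 1)) 2 / 2 * Real.log ((N:ℝ) ^ 2 / β)
        = min (q / (q - 1)) 2 / 2 * Real.log ((N:ℝ) ^ 2 / c)
          + min (q / (q - 1)) 2 / 2 * Real.log (c / β) := by
          rw [← mul_add, ← Real.log_mul (by positivity) (by positivity)]
          congr 2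
          field_simp
      _ ≤ _ := add_le_add hbound1 hbound2
  constructor
  · -- general case
    have hb : ∀ i, (singularValues X i) ^ 2 ≤ ((N:ℝ)) := by
      intro i
      apply RTaux.sv_sq_le_of_mulVec_bound X hNpos.le _ i
      intro v
      rw [hXdef, RTaux.nsq_super_mulVec, ← RTaux.frobSq_of_vec v, hK]
      have hAA : ∀ w : Fin N → ℂ, ∑ i, RTaux.nsq ((A i)ᴴ *ᵥ w) ≤ (N:ℝ) * RTaux.nsq w := by
        intro w
        have h := RTaux.kraus_qf_bound A hTP w
        rwa [Fintype.card_fin] at h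
      exact RTaux.frob_bound_of_kraus A hNpos.le hAA hTP _
    have h := main N hNpos hb
    have hNN : ((N:ℝ) ^ 2 / N) = (N:ℝ) := by
      rw [sq]
      field_simp
    rwa [hNN] at h
  · intro hU
    have hone : ∑ i, A i * (A i)ᴴ = 1 := by
      have h := hK 1
      simp only [Matrix.mul_one] at h
      rw [← h]
      exact hU
    have hb : ∀ i, (singularValues X i) ^ 2 ≤ (1:ℝ) := by
      intro i
      apply RTaux.sv_sq_le_of_mulVec_bound X zero_le_one _ i
      intro v
      rw [hXdef, RTaux.nsq_super_mulVec, ← RTaux.frobSq_of_vec v, hK]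
      exact RTaux.frob_bound_of_kraus A zero_le_one
        (RTaux.kraus_qf_bound_unital A hone) hTP _
    have h := main 1 one_pos hb
    rw [div_one] at h
    have hlog2 : Real.log ((N:ℝ) ^ 2) = 2 * Real.log N := by
      rw [Real.log_pow]
      norm_num
    rw [hlog2] at h
    calc min (q / (q - 1)) 2 * Real.log N
        = min (q / (q - 1)) 2 / 2 * (2 * Real.log N) := by ring
      _ ≤ _ := h


end
end

section
/- For any CPTP map Φ on an N-dimensional system and q > 1, the Rényi receiver entropy satisfies S_q^rec(Φ) ≤ (1/(1−q)) ln( Λ^{−q} + (Λ−1)^q / (Λ^q (N²−1)^{q−1}) ), where Λ = Λ_Φ is the trace norm of the superoperator. -/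
open Matrix
open scoped BigOperators Kronecker ComplexOrder

noncomputable section

open Finset in
lemma sum_rpow_bound' {ι : Type*} [Fintype ι] (s : Finset ι) (f : ι → ℝ)
    (hf : ∀ i ∈ s, 0 ≤ f i) {q : ℝ} (hq : 1 ≤ q) :
    (∑ i ∈ s, f i) ^ q ≤ (s.card : ℝ) ^ (q - 1) * ∑ i ∈ s, f i ^ q := by
  rcases s.eq_empty_or_nonempty with rfl | hne
  · simp [Real.zero_rpow (by linarith : q ≠ 0)]
  · have hc : (0:ℝ) < s.card := by exact_mod_cast Finset.card_pos.mpr hne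
    have h := Real.rpow_arith_mean_le_arith_mean_rpow s (fun _ => 1 / s.card) f
      (fun i _ => by positivity) (by rw [Finset.sum_const, nsmul_eq_mul, mul_one_div_cancel hc.ne']) hf hq
    have hls : (∑ i ∈ s, (1 / (s.card:ℝ)) * f i) = (∑ i ∈ s, f i) / s.card := by
      rw [Finset.sum_div]; exact Finset.sum_congr rfl fun i _ => by ring
    have hrs : (∑ i ∈ s, (1 / (s.card:ℝ)) * f i ^ q) = (∑ i ∈ s, f i ^ q) / s.card := by
      rw [Finset.sum_div]; exact Finset.sum_congr rfl fun i _ => by ring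
    simp only [hls, hrs] at h
    rw [Real.div_rpow (Finset.sum_nonneg hf) hc.le] at h
    have hcq : (0:ℝ) < (s.card:ℝ) ^ q := Real.rpow_pos_of_pos hc q
    rw [div_le_div_iff₀ hcq hc] at h
    calc (∑ i ∈ s, f i) ^ q ≤ (∑ i ∈ s, f i ^ q) * (s.card:ℝ) ^ q / s.card := by
          rw [le_div_iff₀ hc]; linarith
      _ = (s.card : ℝ) ^ (q - 1) * ∑ i ∈ s, f i ^ q := by
          rw [Real.rpow_sub hc, Real.rpow_one]; ring

lemma g_mono' {m Λ q : ℝ} (hm : 1 ≤ m) (hΛ : Λ ≤ m + 1) (hq : 1 < q) :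
    MonotoneOn (fun t => t ^ q + m ^ (1-q) * (Λ - t) ^ q) (Set.Icc 1 Λ) := by
  have hm0 : (0:ℝ) < m := by linarith
  apply monotoneOn_of_deriv_nonneg (convex_Icc 1 Λ)
  · apply ContinuousOn.add
    · exact continuousOn_id.rpow_const (fun x hx => Or.inl (by rw [Set.mem_Icc] at hx; intro h; simp [id] at h; linarith [hx.1]))
    · exact continuousOn_const.mul ((continuousOn_const.sub continuousOn_id).rpow_const
        (fun x hx => Or.inr (by linarith)))
  · rw [interior_Icc]
    intro x hx
    obtain ⟨hx1, hx2⟩ := hx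
    have h1 : HasDerivAt (fun t : ℝ => t ^ q) (q * x ^ (q-1)) x := by
      simpa using Real.hasDerivAt_rpow_const (p := q) (Or.inl (by linarith : x ≠ 0))
    have h2 : HasDerivAt (fun t : ℝ => (Λ - t) ^ q) (-1 * q * (Λ - x) ^ (q-1)) x := by
      have hin : HasDerivAt (fun t : ℝ => Λ - t) (-1) x := (hasDerivAt_id x).const_sub Λ
      exact hin.rpow_const (Or.inl (by intro h; linarith [h] : Λ - x ≠ 0))
    exact ((h1.add (h2.const_mul _)).differentiableAt).differentiableWithinAt
  · rw [interior_Icc]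
    intro x hx
    obtain ⟨hx1, hx2⟩ := hx
    have h1 : HasDerivAt (fun t : ℝ => t ^ q) (q * x ^ (q-1)) x := by
      simpa using Real.hasDerivAt_rpow_const (p := q) (Or.inl (by linarith : x ≠ 0))
    have h2 : HasDerivAt (fun t : ℝ => (Λ - t) ^ q) (-1 * q * (Λ - x) ^ (q-1)) x := by
      have hin : HasDerivAt (fun t : ℝ => Λ - t) (-1) x := (hasDerivAt_id x).const_sub Λ
      exact hin.rpow_const (Or.inl (by intro h; linarith [h] : Λ - x ≠ 0))
    have hD := (h1.add (h2.const_mul (m ^ (1-q)))).deriv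
    rw [show (fun t => t ^ q + m ^ (1 - q) * (Λ - t) ^ q) = ((fun t : ℝ => t ^ q) + fun y => m ^ (1 - q) * (Λ - y) ^ q) from rfl, hD]
    have key : m ^ (1-q) * (Λ - x) ^ (q-1) ≤ x ^ (q-1) := by
      have h3 : (Λ - x) ^ (q-1) ≤ (m * x) ^ (q-1) :=
        Real.rpow_le_rpow (by linarith) (by nlinarith) (by linarith)
      have h4 : (m * x) ^ (q-1) = m ^ (q-1) * x ^ (q-1) :=
        Real.mul_rpow hm0.le (by linarith)
      have h5 : m ^ (1-q) = (m ^ (q-1))⁻¹ := by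
        rw [show (1-q) = -(q-1) by ring, Real.rpow_neg hm0.le]
      have h6 : (0:ℝ) < m ^ (q-1) := Real.rpow_pos_of_pos hm0 _
      rw [h5, inv_mul_le_iff₀ h6]
      calc (Λ - x) ^ (q-1) ≤ (m * x) ^ (q-1) := h3
        _ = m ^ (q-1) * x ^ (q-1) := h4
    have hq0 : 0 < q := by linarith
    have hmp : 0 ≤ m ^ (1-q) := (Real.rpow_pos_of_pos hm0 _).le
    nlinarith [key]

lemma key_ineq' {ι : Type*} [Fintype ι] (σ : ι → ℝ) (hσ : ∀ i, 0 ≤ σ i)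
    (n : ℕ) (hcard : Fintype.card ι = n) (hn : 0 < n)
    (i0 : ι) (h1 : 1 ≤ σ i0) (hΛn : (∑ i, σ i) ≤ (n:ℝ))
    (q : ℝ) (hq : 1 < q) :
    (∑ i, σ i) ^ (-q) + ((∑ i, σ i) - 1) ^ q / ((∑ i, σ i) ^ q * ((n:ℝ) - 1) ^ (q-1))
      ≤ ∑ i, (σ i / ∑ j, σ j) ^ q := by
  classical
  set Λ := ∑ i, σ i with hΛdef
  have hΛs : σ i0 ≤ Λ := Finset.single_le_sum (fun i _ => hσ i) (Finset.mem_univ i0)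
  have hΛ1 : 1 ≤ Λ := le_trans h1 hΛs
  have hΛ0 : (0:ℝ) < Λ := by linarith
  have hΛq : (0:ℝ) < Λ ^ q := Real.rpow_pos_of_pos hΛ0 q
  rcases Nat.lt_or_ge n 2 with hn1 | hn2
  · have hn1' : n = 1 := by omega
    obtain ⟨a, ha⟩ := Finset.card_eq_one.mp
      (by rw [Finset.card_univ, hcard, hn1'] : (Finset.univ : Finset ι).card = 1)
    have hia : i0 = a := by
      have := Finset.mem_univ i0; rw [ha] at this; exact Finset.mem_singleton.mp this
    have hsum : Λ = σ i0 := by rw [hΛdef, ha, hia, Finset.sum_singleton]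
    have hLHSsum : ∑ i, (σ i / Λ)^q = 1 := by
      rw [ha, Finset.sum_singleton, ← hia, ← hsum, div_self hΛ0.ne', Real.one_rpow]
    rw [hLHSsum, hn1']
    have h0 : ((1:ℕ):ℝ) - 1 = 0 := by norm_num
    rw [h0, Real.zero_rpow (by linarith : q - 1 ≠ 0), mul_zero, div_zero, add_zero]
    exact Real.rpow_le_one_of_one_le_of_nonpos hΛ1 (by linarith)
  · set m : ℝ := (n:ℝ) - 1 with hmdef
    have hm1 : 1 ≤ m := by
      have h2 : (2:ℝ) ≤ (n:ℝ) := by exact_mod_cast hn2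
      rw [hmdef]; linarith
    have hm0 : (0:ℝ) < m := by linarith
    have hmq : (0:ℝ) < m ^ (q-1) := Real.rpow_pos_of_pos hm0 _
    set s := σ i0 with hsdef
    set t : Finset ι := Finset.univ.erase i0 with htdef
    have htc : (t.card : ℝ) = m := by
      rw [htdef, Finset.card_erase_of_mem (Finset.mem_univ _), Finset.card_univ, hcard,
        Nat.cast_sub (by omega), hmdef]; norm_num
    have hsplit : ∀ f : ι → ℝ, ∑ i, f i = f i0 + ∑ i ∈ t, f i := by
      intro f
      rw [htdef, Finset.add_sum_erase _ f (Finset.mem_univ i0)]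
    have hts : ∑ i ∈ t, σ i = Λ - s := by
      have h := hsplit σ; rw [← hΛdef] at h; linarith
    have hA := sum_rpow_bound' t (fun i => σ i / Λ) (fun i _ => div_nonneg (hσ i) hΛ0.le) hq.le
    have htsum : ∑ i ∈ t, σ i / Λ = (Λ - s)/Λ := by rw [← Finset.sum_div, hts]
    simp only [htsum, htc] at hA
    have hg := (g_mono' hm1 (by rw [hmdef]; linarith) hq)
      (Set.mem_Icc.mpr ⟨le_refl 1, hΛ1⟩) (Set.mem_Icc.mpr ⟨h1, hΛs⟩) h1
    simp only [Real.one_rpow] at hg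
    have h1q : m ^ (1-q) = (m ^ (q-1))⁻¹ := by
      rw [show (1:ℝ)-q = -(q-1) by ring, Real.rpow_neg hm0.le]
    have hLHSeq : Λ ^ (-q) + (Λ - 1)^q / (Λ^q * m^(q-1))
        = (1 + m^(1-q) * (Λ-1)^q)/Λ^q := by
      rw [Real.rpow_neg hΛ0.le, h1q]; ring
    rw [hLHSeq]
    have step2 : (1 + m^(1-q) * (Λ-1)^q)/Λ^q ≤ (s^q + m^(1-q)*(Λ-s)^q)/Λ^q :=
      div_le_div_of_nonneg_right hg hΛq.le
    have hdecomp : (s^q + m^(1-q)*(Λ-s)^q)/Λ^q = (s/Λ)^q + ((Λ-s)/Λ)^q * m^(1-q) := by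
      rw [Real.div_rpow (hσ i0) hΛ0.le, Real.div_rpow (by linarith : (0:ℝ) ≤ Λ - s) hΛ0.le]
      ring
    have step3 : ((Λ-s)/Λ)^q * m^(1-q) ≤ ∑ i ∈ t, (σ i/Λ)^q := by
      rw [h1q, ← div_eq_mul_inv, div_le_iff₀ hmq]
      calc ((Λ-s)/Λ)^q ≤ m^(q-1) * ∑ i ∈ t, (σ i/Λ)^q := hA
        _ = (∑ i ∈ t, (σ i/Λ)^q) * m^(q-1) := by ring
    have hfin : ∑ i, (σ i/Λ)^q = (s/Λ)^q + ∑ i ∈ t, (σ i/Λ)^q :=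
      hsplit (fun i => (σ i/Λ)^q)
    rw [hfin]
    linarith [step2, step3, hdecomp]

lemma cs_normSq' {k : ℕ} (x y : Fin k → ℂ) :
    Complex.normSq (∑ j, x j * star (y j))
      ≤ (∑ j, Complex.normSq (x j)) * (∑ j, Complex.normSq (y j)) := by
  have h1 : ‖∑ j, x j * star (y j)‖ ≤ ∑ j, ‖x j‖ * ‖y j‖ := by
    refine (norm_sum_le _ _).trans_eq ?_
    simp
  have h2 : (∑ j, ‖x j‖ * ‖y j‖)^2
      ≤ (∑ j, ‖x j‖^2) * (∑ j, ‖y j‖^2) :=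
    Finset.sum_mul_sq_le_sq_mul_sq _ _ _
  have h3 : Complex.normSq (∑ j, x j * star (y j))
      = ‖∑ j, x j * star (y j)‖ ^ 2 := (Complex.sq_norm _).symm
  rw [h3]
  calc ‖∑ j, x j * star (y j)‖ ^ 2
      ≤ (∑ j, ‖x j‖ * ‖y j‖)^2 := by
        apply pow_le_pow_left₀ (norm_nonneg _) h1
    _ ≤ (∑ j, ‖x j‖^2) * (∑ j, ‖y j‖^2) := h2
    _ = (∑ j, Complex.normSq (x j)) * (∑ j, Complex.normSq (y j)) := by
        simp [Complex.sq_norm]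

lemma eig_sum_eq' {n : Type*} [Fintype n] [DecidableEq n] (S : Matrix n n ℂ) :
    ∑ i, (Matrix.posSemidef_self_mul_conjTranspose S).1.eigenvalues i
      = ∑ p, ∑ r, Complex.normSq (S p r) := by
  have hA : (S * Sᴴ).IsHermitian := (Matrix.posSemidef_self_mul_conjTranspose S).1
  have htr : (S * Sᴴ).trace = ∑ i, (hA.eigenvalues i : ℂ) := by
    conv_lhs => rw [hA.spectral_theorem]
    rw [Unitary.conjStarAlgAut_apply, Matrix.trace_mul_cycle, Unitary.coe_star_mul_self, one_mul,
      Matrix.trace_diagonal]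
    simp
  have htr2 : (S * Sᴴ).trace = ∑ p, ∑ r, (Complex.normSq (S p r) : ℂ) := by
    simp [Matrix.trace, Matrix.diag, Matrix.mul_apply, Matrix.conjTranspose_apply,
      Complex.mul_conj]
  have := htr.symm.trans htr2
  exact_mod_cast this

lemma eig_exists_one_le' {n : Type*} [Fintype n] [DecidableEq n] (S : Matrix n n ℂ) (v : n → ℂ)
    (hSv : Sᴴ *ᵥ v = v) {Nr : ℝ} (hNr : 0 < Nr)
    (hvN : dotProduct (star v) v = (Nr : ℂ)) :
    ∃ i, 1 ≤ (Matrix.posSemidef_self_mul_conjTranspose S).1.eigenvalues i := by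
  set A := S * Sᴴ with hAdef
  have hA : A.IsHermitian := (Matrix.posSemidef_self_mul_conjTranspose S).1
  set U : Matrix n n ℂ := (hA.eigenvectorUnitary : Matrix n n ℂ) with hUdef
  set c : n → ℂ := star U *ᵥ v with hcdef
  have hstarc : star c = star v ᵥ* U := by
    rw [hcdef, Matrix.star_mulVec, Matrix.star_eq_conjTranspose, conjTranspose_conjTranspose]
  have hUU : U * star U = 1 := (Matrix.mem_unitaryGroup_iff).mp hA.eigenvectorUnitary.2
  have hvS : star v ᵥ* S = star v := by
    have h' := congrArg star hSv
    rwa [Matrix.star_mulVec, conjTranspose_conjTranspose] at h'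
  have e1 : star v ⬝ᵥ (A *ᵥ v) = (Nr : ℂ) := by
    rw [hAdef, ← Matrix.mulVec_mulVec, hSv, Matrix.dotProduct_mulVec, hvS, hvN]
  have e2 : star v ⬝ᵥ (A *ᵥ v) = ∑ i, (hA.eigenvalues i : ℂ) * (Complex.normSq (c i) : ℝ) := by
    conv_lhs => rw [hA.spectral_theorem]
    rw [Unitary.conjStarAlgAut_apply, ← Matrix.mulVec_mulVec, ← Matrix.mulVec_mulVec, Matrix.dotProduct_mulVec, ← hstarc,
      ← hcdef]
    simp only [dotProduct, Matrix.mulVec, Matrix.diagonal, dotProduct,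
      Function.comp_apply, Matrix.of_apply]
    refine Finset.sum_congr rfl fun i _ => ?_
    rw [Finset.sum_eq_single i (by intro b _ hb; simp [Ne.symm hb]) (by simp)]
    simp [Pi.star_apply, Complex.normSq_eq_conj_mul_self]
    ring
  have e4 : star c ⬝ᵥ c = (Nr : ℂ) := by
    rw [hstarc, hcdef, ← Matrix.dotProduct_mulVec, Matrix.mulVec_mulVec, hUU, Matrix.one_mulVec,
      hvN]
  have e5 : star c ⬝ᵥ c = ∑ i, (Complex.normSq (c i) : ℂ) := by
    simp [dotProduct, Complex.normSq_eq_conj_mul_self]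
  have r1 : ∑ i, hA.eigenvalues i * Complex.normSq (c i) = Nr := by
    have := e2.symm.trans e1
    exact_mod_cast this
  have r2 : ∑ i, Complex.normSq (c i) = Nr := by
    have := e5.symm.trans e4
    exact_mod_cast this
  by_contra hcon
  push_neg at hcon
  have hle : ∀ i ∈ Finset.univ, hA.eigenvalues i * Complex.normSq (c i) ≤ Complex.normSq (c i) :=
    fun i _ => by nlinarith [Complex.normSq_nonneg (c i), hcon i]
  have heq : ∀ i ∈ Finset.univ, hA.eigenvalues i * Complex.normSq (c i) = Complex.normSq (c i) :=
    (Finset.sum_eq_sum_iff_of_le hle).mp (by rw [r1, r2])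
  have hz : ∀ i, Complex.normSq (c i) = 0 := by
    intro i
    have := heq i (Finset.mem_univ i)
    nlinarith [hcon i, Complex.normSq_nonneg (c i)]
  rw [Finset.sum_congr rfl (fun i _ => hz i), Finset.sum_const, smul_zero] at r2
  linarith

lemma stdBasis_trace' {N : ℕ} (i j : Fin N) :
    (Matrix.single i j (1:ℂ)).trace = if i = j then (1:ℂ) else 0 := by
  by_cases h : i = j
  · subst h; simp [Matrix.trace, Matrix.diag, Matrix.single]
  · simp only [Matrix.trace, Matrix.diag, Matrix.single, Matrix.of_apply, if_neg h]
    rw [Finset.sum_eq_zero]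
    intro a _
    rw [if_neg]
    rintro ⟨h1, h2⟩
    exact h (h1.trans h2.symm)


theorem renyi_receiver_entropy_upper_bound {N : ℕ} (hN : 0 < N)
    (Φ : Matrix (Fin N) (Fin N) ℂ →ₗ[ℂ] Matrix (Fin N) (Fin N) ℂ) (hΦ : IsCPTP Φ) (q : ℝ) (hq : 1 < q) :
    renyiH q (singularValues (superMatrix Φ))
      ≤ (1 / (1 - q)) *
        Real.log ((∑ i, singularValues (superMatrix Φ) i) ^ (-q)
          + ((∑ i, singularValues (superMatrix Φ) i) - 1) ^ q /
            ((∑ i, singularValues (superMatrix Φ) i) ^ q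
              * ((N : ℝ) ^ 2 - 1) ^ (q - 1))) := by
  classical
  obtain ⟨k, A, hK, hTP⟩ := hΦ
  set S := superMatrix Φ with hSdef
  set lam : Fin N × Fin N → ℝ :=
    (Matrix.posSemidef_self_mul_conjTranspose S).1.eigenvalues with hlamdef
  have hlam_nonneg : ∀ i, 0 ≤ lam i :=
    fun i => (Matrix.posSemidef_self_mul_conjTranspose S).eigenvalues_nonneg i
  set σv : Fin N × Fin N → ℝ := fun i => Real.sqrt (lam i) with hσdef
  have hσeq : singularValues S = σv := rfl
  have hσ_nonneg : ∀ i, 0 ≤ σv i := fun i => Real.sqrt_nonneg _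
  -- trace preservation
  have htr : ∀ M, (Φ M).trace = M.trace := by
    intro M
    rw [hK, Matrix.trace_sum]
    have hcyc : ∀ j, (A j * M * (A j)ᴴ).trace = ((A j)ᴴ * A j * M).trace := by
      intro j; rw [Matrix.trace_mul_cycle]
    simp only [hcyc]
    rw [← Matrix.trace_sum, ← Finset.sum_mul, hTP, one_mul]
  -- the fixed vector
  set v : Fin N × Fin N → ℂ := fun p => if p.1 = p.2 then (1:ℂ) else 0 with hvdef
  have hSv : Sᴴ *ᵥ v = v := by
    funext r
    show ∑ p : Fin N × Fin N, Sᴴ r p * v p = _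
    rw [Fintype.sum_prod_type]
    simp only [hvdef, Matrix.conjTranspose_apply, mul_ite, mul_one, mul_zero]
    simp only [Finset.sum_ite_eq, Finset.mem_univ, if_true]
    have htrv : ∑ a : Fin N, star (S (a, a) r)
        = star ((Φ (Matrix.single r.1 r.2 1)).trace) := by
      rw [← star_sum]; rfl
    rw [htrv, htr, stdBasis_trace']
    split <;> simp
  have hvN : dotProduct (star v) v = (((N:ℝ)) : ℂ) := by
    simp [hvdef, dotProduct, Fintype.sum_prod_type, apply_ite, Finset.sum_ite_eq]
  -- existence of a large eigenvalue
  obtain ⟨i1, hi1⟩ := eig_exists_one_le' S v hSv (by exact_mod_cast hN) hvN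
  have h1σ : 1 ≤ σv i1 := by
    rw [hσdef]
    calc (1:ℝ) = Real.sqrt 1 := Real.sqrt_one.symm
      _ ≤ Real.sqrt (lam i1) := Real.sqrt_le_sqrt hi1
  -- entries of superMatrix
  have hSentry : ∀ p r : Fin N × Fin N, S p r = ∑ j, A j p.1 r.1 * star (A j p.2 r.2) := by
    intro p r
    simp [hSdef, superMatrix, hK, Matrix.sum_apply, Matrix.mul_apply, Matrix.single,
      Matrix.conjTranspose_apply, Finset.sum_ite_eq, ite_and]
  -- trace of Kraus normalization
  have hT : ∑ j, ∑ c, ∑ a, Complex.normSq (A j a c) = (N:ℝ) := by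
    have h := congrArg Matrix.trace hTP
    rw [Matrix.trace_sum, Matrix.trace_one] at h
    have h2 : ∀ j, ((A j)ᴴ * A j).trace = ∑ c, ∑ a, (Complex.normSq (A j a c) : ℂ) := by
      intro j
      simp [Matrix.trace, Matrix.diag, Matrix.mul_apply, Matrix.conjTranspose_apply,
        Complex.normSq_eq_conj_mul_self]
    simp only [h2] at h
    have h' : (∑ j, ∑ c, ∑ a, Complex.normSq (A j a c)) = ((Fintype.card (Fin N) : ℕ) : ℝ) := by
      exact_mod_cast h
    simpa using h'
  -- Hilbert-Schmidt norm bound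
  set u : Fin N → Fin N → ℝ := fun a c => ∑ j, Complex.normSq (A j a c) with hudef
  have hu_nonneg : ∀ a c, 0 ≤ u a c :=
    fun a c => Finset.sum_nonneg fun j _ => Complex.normSq_nonneg _
  have hUsum : (∑ a, ∑ c, u a c) = (N:ℝ) := by
    rw [hudef]
    calc ∑ a, ∑ c, ∑ j, Complex.normSq (A j a c)
        = ∑ a, ∑ j, ∑ c, Complex.normSq (A j a c) :=
          Finset.sum_congr rfl fun a _ => Finset.sum_comm
      _ = ∑ j, ∑ a, ∑ c, Complex.normSq (A j a c) := Finset.sum_comm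
      _ = ∑ j, ∑ c, ∑ a, Complex.normSq (A j a c) :=
          Finset.sum_congr rfl fun j _ => Finset.sum_comm
      _ = (N:ℝ) := hT
  have hHS : (∑ p, ∑ r, Complex.normSq (S p r)) ≤ (N:ℝ)^2 := by
    have hb : ∀ p r : Fin N × Fin N, Complex.normSq (S p r) ≤ u p.1 r.1 * u p.2 r.2 := by
      intro p r
      rw [hSentry p r, hudef]
      exact cs_normSq' (fun j => A j p.1 r.1) (fun j => A j p.2 r.2)
    calc (∑ p, ∑ r, Complex.normSq (S p r))
        ≤ ∑ p : Fin N × Fin N, ∑ r : Fin N × Fin N, u p.1 r.1 * u p.2 r.2 :=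
          Finset.sum_le_sum fun p _ => Finset.sum_le_sum fun r _ => hb p r
      _ = ∑ a, ∑ b, ((∑ c, u a c) * (∑ d, u b d)) := by
          rw [Fintype.sum_prod_type]
          refine Finset.sum_congr rfl fun a _ => Finset.sum_congr rfl fun b _ => ?_
          rw [Fintype.sum_prod_type, Finset.sum_mul_sum]
      _ = (∑ a, ∑ c, u a c) * (∑ b, ∑ d, u b d) := (Finset.sum_mul_sum _ _ _ _).symm
      _ = (N:ℝ) * (N:ℝ) := by rw [hUsum]
      _ = (N:ℝ)^2 := (sq (N:ℝ)).symm
  have hlamsum : ∑ i, lam i ≤ (N:ℝ)^2 := by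
    rw [hlamdef, eig_sum_eq' S]; exact hHS
  -- sum of singular values bound
  have hcard : Fintype.card (Fin N × Fin N) = N^2 := by
    simp [Fintype.card_prod, sq]
  have hΛn : (∑ i, σv i) ≤ ((N^2 : ℕ) : ℝ) := by
    have hsq : (∑ i, σv i)^2 ≤ (Fintype.card (Fin N × Fin N)) * ∑ i, (σv i)^2 := by
      simpa using sq_sum_le_card_mul_sum_sq (s := (Finset.univ : Finset (Fin N × Fin N)))
        (f := σv)
    have hσsq : ∀ i, (σv i)^2 = lam i := fun i => Real.sq_sqrt (hlam_nonneg i)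
    simp only [hσsq, hcard] at hsq
    have hN2 : (0:ℝ) ≤ ((N^2 : ℕ) : ℝ) := by positivity
    have h2 : (∑ i, σv i)^2 ≤ ((N^2:ℕ):ℝ) * ((N:ℝ)^2) :=
      le_trans hsq (by
        apply mul_le_mul_of_nonneg_left hlamsum hN2)
    have hc : ((N^2:ℕ):ℝ) = (N:ℝ)^2 := by push_cast; ring
    have hnn : 0 ≤ ∑ i, σv i := Finset.sum_nonneg fun i _ => hσ_nonneg i
    nlinarith [h2, hc, hnn]
  -- main inequality on sums
  have hkey := key_ineq' σv hσ_nonneg (N^2) hcard (by positivity) i1 h1σ hΛn q hq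
  -- translate casts
  have hcast : ((N^2 : ℕ) : ℝ) - 1 = (N:ℝ)^2 - 1 := by push_cast; ring
  rw [hcast] at hkey
  -- positivity of the RHS argument
  set Λ := ∑ i, σv i with hΛdef
  have hΛ1 : 1 ≤ Λ := le_trans h1σ (Finset.single_le_sum (fun i _ => hσ_nonneg i)
    (Finset.mem_univ i1))
  have hΛ0 : (0:ℝ) < Λ := by linarith
  have hN1 : (1:ℝ) ≤ (N:ℝ) := by exact_mod_cast hN
  have hpos : 0 < Λ ^ (-q) + (Λ - 1)^q / (Λ^q * ((N:ℝ)^2 - 1)^(q-1)) := by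
    have h1 : 0 < Λ ^ (-q) := Real.rpow_pos_of_pos hΛ0 _
    have h2 : 0 ≤ (Λ - 1)^q / (Λ^q * ((N:ℝ)^2 - 1)^(q-1)) := by
      apply div_nonneg (Real.rpow_nonneg (by linarith) _)
      apply mul_nonneg (Real.rpow_nonneg hΛ0.le _)
      apply Real.rpow_nonneg
      nlinarith
    linarith
  -- conclude via log monotonicity
  show (1 / (1 - q)) * Real.log (∑ i, (σv i / ∑ j, σv j) ^ q) ≤ _
  have hlog : Real.log (Λ ^ (-q) + (Λ - 1)^q / (Λ^q * ((N:ℝ)^2 - 1)^(q-1)))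
      ≤ Real.log (∑ i, (σv i / ∑ j, σv j) ^ q) := Real.log_le_log hpos hkey
  have hcoef : (1:ℝ) / (1 - q) ≤ 0 := by
    apply div_nonpos_of_nonneg_of_nonpos <;> linarith
  exact mul_le_mul_of_nonpos_left hlog hcoef


end
end
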